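/- arXiv:2003.09681 — 5 statements merged into one kernel-verified Lean document; each statement's English description precedes it below -/
import Mathlib

section
/- Let K ⊆ ℝ^d be a compact set, let f : K → ℝ admit a derivative df on K (df not assumed continuous), and let x, y ∈ K. If γ : [a,b] → K is a rectifiable path with γ(a) = x and γ(b) = y, then |f(y) − f(x)| ≤ L(γ) · sup{|df(z)| : z ∈ γ([a,b])}. -/
open Set Filter Topology MeasureTheory
open scoped NNReal ENNReal

noncomputable section

/-- `df` is a (not necessarily unique) derivative of `f` on the set `K`:
at every `x ∈ K`, `(f y - f x - ⟪df x, y - x⟫)/‖y - x‖ → 0` as `y → x` within `K`. -/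
def IsDerivOn {d : ℕ} (K : Set (EuclideanSpace ℝ (Fin d)))
    (f : EuclideanSpace ℝ (Fin d) → ℝ)
    (df : EuclideanSpace ℝ (Fin d) → EuclideanSpace ℝ (Fin d)) : Prop :=
  ∀ x ∈ K, Filter.Tendsto
    (fun y => (f y - f x - (inner ℝ (df x) (y - x) : ℝ)) / ‖y - x‖)
    (𝓝[K \ {x}] x) (𝓝 0)

/-- Key local estimate from the derivative condition. -/
lemma isDerivOn_key {d : ℕ} {K : Set (EuclideanSpace ℝ (Fin d))}
    {f : EuclideanSpace ℝ (Fin d) → ℝ}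
    {df : EuclideanSpace ℝ (Fin d) → EuclideanSpace ℝ (Fin d)}
    (hdf : IsDerivOn K f df) {z : EuclideanSpace ℝ (Fin d)} (hz : z ∈ K)
    {ε : ℝ} (hε : 0 < ε) :
    ∃ δ > 0, ∀ w ∈ K, ‖w - z‖ < δ → |f w - f z| ≤ (‖df z‖ + ε) * ‖w - z‖ := by
  have h := hdf z hz
  rw [Metric.tendsto_nhdsWithin_nhds] at h
  obtain ⟨δ, hδ, h⟩ := h ε hε
  refine ⟨δ, hδ, fun w hw hwz => ?_⟩
  rcases eq_or_ne w z with rfl | hne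
  · simp
  have hwK : w ∈ K \ {z} := ⟨hw, hne⟩
  have hd : dist w z < δ := by rwa [dist_eq_norm]
  have h2 := h hwK hd
  rw [dist_zero_right] at h2
  have hnorm : 0 < ‖w - z‖ := by
    rw [norm_pos_iff, sub_ne_zero]; exact hne
  rw [norm_div, norm_norm, div_lt_iff₀ hnorm] at h2
  have hinner : |(inner ℝ (df z) (w - z) : ℝ)| ≤ ‖df z‖ * ‖w - z‖ := abs_real_inner_le_norm _ _
  calc |f w - f z| = |(f w - f z - (inner ℝ (df z) (w - z) : ℝ)) + (inner ℝ (df z) (w - z) : ℝ)| := by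
        ring_nf
    _ ≤ ‖f w - f z - (inner ℝ (df z) (w - z) : ℝ)‖ + |(inner ℝ (df z) (w - z) : ℝ)| :=
        abs_add_le _ _
    _ ≤ ε * ‖w - z‖ + ‖df z‖ * ‖w - z‖ := add_le_add h2.le hinner
    _ = (‖df z‖ + ε) * ‖w - z‖ := by ring

/-- **Mean value inequality.** If `df` is a derivative of `f` on the compact set `K`,
`x, y ∈ K`, and `γ : [a,b] → K` is a rectifiable path from `x` to `y`, then
`|f y - f x| ≤ L(γ) * sup {‖df z‖ : z ∈ γ([a,b])}` (formulated via an arbitrary upper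
bound `M` of `‖df‖` on the image of `γ`). -/
theorem mean_value_inequality {d : ℕ} (K : Set (EuclideanSpace ℝ (Fin d)))
    (hK : IsCompact K)
    (f : EuclideanSpace ℝ (Fin d) → ℝ)
    (df : EuclideanSpace ℝ (Fin d) → EuclideanSpace ℝ (Fin d))
    (hdf : IsDerivOn K f df)
    (x y : EuclideanSpace ℝ (Fin d)) (hx : x ∈ K) (hy : y ∈ K)
    (a b : ℝ) (hab : a ≤ b) (γ : ℝ → EuclideanSpace ℝ (Fin d))
    (hγcont : ContinuousOn γ (Icc a b)) (hγK : MapsTo γ (Icc a b) K)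
    (hγa : γ a = x) (hγb : γ b = y)
    (hrect : eVariationOn γ (Icc a b) ≠ ⊤)
    (M : ℝ) (hM : ∀ t ∈ Icc a b, ‖df (γ t)‖ ≤ M) :
    |f y - f x| ≤ (eVariationOn γ (Icc a b)).toReal * M := by
  set V : ℝ → ℝ := fun t => (eVariationOn γ (Icc a t)).toReal with hV
  -- finiteness of partial variations
  have hfin : ∀ t, t ≤ b → eVariationOn γ (Icc a t) ≠ ⊤ := fun t ht =>
    ne_top_of_le_ne_top hrect (eVariationOn.mono γ (Icc_subset_Icc le_rfl ht))
  have hfin2 : ∀ s t, a ≤ s → t ≤ b → eVariationOn γ (Icc s t) ≠ ⊤ := fun s t hs ht =>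
    ne_top_of_le_ne_top hrect (eVariationOn.mono γ (Icc_subset_Icc hs ht))
  -- additivity / jump estimate
  have hadd : ∀ s t, a ≤ s → s ≤ t → t ≤ b → V t = V s + (eVariationOn γ (Icc s t)).toReal := by
    intro s t has hst htb
    have := eVariationOn.Icc_add_Icc (s := (univ : Set ℝ)) γ has hst (mem_univ s)
    simp only [univ_inter] at this
    rw [hV]
    simp only
    rw [← this, ENNReal.toReal_add (hfin s (hst.trans htb)) (hfin2 s t has htb)]
  have hjump : ∀ s t, a ≤ s → s ≤ t → t ≤ b → ‖γ t - γ s‖ ≤ V t - V s := by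
    intro s t has hst htb
    rw [hadd s t has hst htb]
    have h1 : edist (γ s) (γ t) ≤ eVariationOn γ (Icc s t) :=
      eVariationOn.edist_le γ ⟨le_rfl, hst⟩ ⟨hst, le_rfl⟩
    have h2 : (edist (γ s) (γ t)).toReal ≤ (eVariationOn γ (Icc s t)).toReal :=
      ENNReal.toReal_mono (hfin2 s t has htb) h1
    rw [← dist_edist, dist_eq_norm, norm_sub_rev] at h2
    linarith
  have hVmono : ∀ s t, a ≤ s → s ≤ t → t ≤ b → V s ≤ V t := by
    intro s t has hst htb
    have := hjump s t has hst htb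
    have := norm_nonneg (γ t - γ s)
    linarith
  have hMnn : 0 ≤ M := le_trans (norm_nonneg _) (hM a ⟨le_rfl, hab⟩)
  have hVbnn : 0 ≤ V b := ENNReal.toReal_nonneg
  -- main ε-statement
  have main : ∀ ε > (0:ℝ), |f y - f x| ≤ (M + ε) * V b + ε * (b - a) := by
    intro ε hε
    set S : Set ℝ := {t | t ∈ Icc a b ∧ |f (γ t) - f (γ a)| ≤ (M + ε) * V t + ε * (t - a)}
      with hS
    have hVa : V a = 0 := by
      rw [hV]; simp only
      rw [Icc_self, eVariationOn.subsingleton γ subsingleton_singleton]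
      simp
    have haS : a ∈ S := by
      refine ⟨⟨le_rfl, hab⟩, ?_⟩
      rw [hVa]; simp
    have hSbdd : BddAbove S := ⟨b, fun t ht => ht.1.2⟩
    set c := sSup S with hc
    have hac : a ≤ c := le_csSup hSbdd haS
    have hcb : c ≤ b := csSup_le ⟨a, haS⟩ fun t ht => ht.1.2
    have hcI : c ∈ Icc a b := ⟨hac, hcb⟩
    have hzK : γ c ∈ K := hγK hcI
    obtain ⟨δ, hδ, hkey⟩ := isDerivOn_key hdf hzK hε
    -- the local bound with M instead of ‖df (γ c)‖
    have hkey' : ∀ t ∈ Icc a b, ‖γ t - γ c‖ < δ →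
        |f (γ t) - f (γ c)| ≤ (M + ε) * ‖γ t - γ c‖ := by
      intro t ht hlt
      refine (hkey _ (hγK ht) hlt).trans ?_
      have := hM c hcI
      nlinarith [norm_nonneg (γ t - γ c)]
    -- continuity of γ at c
    have hγc : ContinuousWithinAt γ (Icc a b) c := hγcont c hcI
    rw [Metric.continuousWithinAt_iff] at hγc
    obtain ⟨δ', hδ', hγc⟩ := hγc δ hδ
    -- step 1 : c ∈ S
    have hcS : |f (γ c) - f (γ a)| ≤ (M + ε) * V c + ε * (c - a) := by
      obtain ⟨t, htS, htlt⟩ := exists_lt_of_lt_csSup ⟨a, haS⟩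
        (show c - δ' < c by linarith)
      have htc : t ≤ c := le_csSup hSbdd htS
      have hdist : dist t c < δ' := by
        rw [Real.dist_eq, abs_lt]; constructor <;> linarith
      have hnd : dist (γ t) (γ c) < δ := hγc htS.1 hdist
      rw [dist_eq_norm] at hnd
      have h1 : |f (γ t) - f (γ c)| ≤ (M + ε) * ‖γ t - γ c‖ := hkey' t htS.1 hnd
      have h2 : ‖γ t - γ c‖ ≤ V c - V t := by
        rw [norm_sub_rev]; exact hjump t c htS.1.1 htc hcb
      have h3 := htS.2
      have habs := abs_sub_abs_le_abs_sub (f (γ c) - f (γ a)) (f (γ t) - f (γ a))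
      have : |f (γ c) - f (γ a) - (f (γ t) - f (γ a))| = |f (γ t) - f (γ c)| := by
        rw [← abs_neg]; ring_nf
      nlinarith [abs_sub_abs_le_abs_sub (f (γ c) - f (γ a)) (f (γ t) - f (γ a))]
    -- step 2 : c = b
    have hcb' : c = b := by
      by_contra hne
      have hclt : c < b := lt_of_le_of_ne hcb hne
      set t := min b (c + δ' / 2) with ht
      have htc : c < t := lt_min hclt (by linarith)
      have htb : t ≤ b := min_le_left _ _
      have htI : t ∈ Icc a b := ⟨hac.trans htc.le, htb⟩
      have hdist : dist t c < δ' := by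
        rw [Real.dist_eq, abs_lt]
        constructor
        · linarith
        · have : t ≤ c + δ' / 2 := min_le_right _ _
          linarith
      have hnd : dist (γ t) (γ c) < δ := hγc htI hdist
      rw [dist_eq_norm] at hnd
      have h1 : |f (γ t) - f (γ c)| ≤ (M + ε) * ‖γ t - γ c‖ := hkey' t htI hnd
      have h2 : ‖γ t - γ c‖ ≤ V t - V c := hjump c t hac htc.le htb
      have htS : t ∈ S := by
        refine ⟨htI, ?_⟩
        have htri := abs_sub (f (γ t) - f (γ a))
        have : |f (γ t) - f (γ a)| ≤ |f (γ t) - f (γ c)| + |f (γ c) - f (γ a)| := by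
          have := abs_add_le (f (γ t) - f (γ c)) (f (γ c) - f (γ a))
          have heq : f (γ t) - f (γ a) = (f (γ t) - f (γ c)) + (f (γ c) - f (γ a)) := by ring
          rw [heq]; exact this
        nlinarith
      exact absurd (le_csSup hSbdd htS) (not_le.mpr htc)
    rw [← hγa, ← hγb, ← hcb']
    exact hcS
  -- take ε → 0
  have hlim : Tendsto (fun ε : ℝ => (M + ε) * V b + ε * (b - a)) (𝓝[>] 0)
      (𝓝 ((eVariationOn γ (Icc a b)).toReal * M)) := by
    have hcont : Continuous fun ε : ℝ => (M + ε) * V b + ε * (b - a) :=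
      (((continuous_const.add continuous_id).mul continuous_const).add
        (continuous_id.mul continuous_const))
    have := hcont.tendsto' 0 ((eVariationOn γ (Icc a b)).toReal * M) (by rw [hV]; ring)
    exact this.mono_left nhdsWithin_le_nhds
  exact ge_of_tendsto hlim (eventually_nhdsWithin_of_forall fun ε hε => main ε hε)

end
end

section
/- Let K ⊆ ℝ^d be a compact set that is rectifiably pathwise connected, i.e., any two points of K can be joined by a rectifiable path in K. If f : K → ℝ admits the zero function as a derivative on K, then f is constant on K. -/
open Set Filter Topology MeasureTheory
open scoped NNReal ENNReal

noncomputable section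

/-- If the compact set `K` is rectifiably pathwise connected and `f` admits the zero
function as a derivative on `K`, then `f` is constant on `K`. -/
theorem constant_of_zero_deriv {d : ℕ} (K : Set (EuclideanSpace ℝ (Fin d)))
    (hK : IsCompact K)
    (hconn : ∀ x ∈ K, ∀ y ∈ K, ∃ (a b : ℝ) (γ : ℝ → EuclideanSpace ℝ (Fin d)),
      a ≤ b ∧ ContinuousOn γ (Icc a b) ∧ MapsTo γ (Icc a b) K ∧
      γ a = x ∧ γ b = y ∧ eVariationOn γ (Icc a b) ≠ ⊤)
    (f : EuclideanSpace ℝ (Fin d) → ℝ)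
    (hdf : IsDerivOn K f (fun _ => 0)) :
    ∀ x ∈ K, ∀ y ∈ K, f x = f y := by
  -- Local estimate from the derivative condition
  have hloc : ∀ x ∈ K, ∀ ε : ℝ, 0 < ε → ∃ δ > 0, ∀ w ∈ K, dist w x < δ →
      |f w - f x| ≤ ε * ‖w - x‖ := by
    intro x hx ε hε
    have h := hdf x hx
    rw [Metric.tendsto_nhdsWithin_nhds] at h
    obtain ⟨δ, hδ, hd⟩ := h ε hε
    refine ⟨δ, hδ, fun w hw hwd => ?_⟩
    rcases eq_or_ne w x with rfl | hne
    · simp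
    · have h2 := hd (x := w) ⟨hw, hne⟩ hwd
      have hnorm : 0 < ‖w - x‖ := by
        rw [norm_pos_iff]; exact sub_ne_zero_of_ne hne
      rw [Real.dist_eq, sub_zero, inner_zero_left (𝕜 := ℝ), sub_zero, abs_div,
        abs_of_pos hnorm, div_lt_iff₀ hnorm] at h2
      exact h2.le
  -- Continuity of f on K
  have hcont : ContinuousOn f K := by
    intro x hx
    rw [← continuousWithinAt_diff_self]
    have h := hdf x hx
    have hnorm : Tendsto (fun y : EuclideanSpace ℝ (Fin d) => ‖y - x‖)
        (𝓝[K \ {x}] x) (𝓝 0) := by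
      have : Tendsto (fun y : EuclideanSpace ℝ (Fin d) => ‖y - x‖) (𝓝 x) (𝓝 ‖x - x‖) :=
        ((continuous_id.sub continuous_const).norm).tendsto x
      simpa using this.mono_left nhdsWithin_le_nhds
    have h2 : Tendsto (fun y => ((f y - f x - (inner ℝ ((0 : EuclideanSpace ℝ (Fin d)))
        (y - x) : ℝ)) / ‖y - x‖) * ‖y - x‖) (𝓝[K \ {x}] x) (𝓝 0) := by
      simpa using h.mul hnorm
    have h3 : Tendsto (fun y => f y - f x) (𝓝[K \ {x}] x) (𝓝 0) := by
      refine h2.congr' ?_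
      filter_upwards [self_mem_nhdsWithin] with y hy
      have hne : ‖y - x‖ ≠ 0 := by
        rw [norm_ne_zero_iff]; exact sub_ne_zero_of_ne hy.2
      field_simp
      simp
    have h4 : Tendsto f (𝓝[K \ {x}] x) (𝓝 (f x)) := by
      have := h3.add (tendsto_const_nhds (x := f x))
      simpa using this
    exact h4
  intro x hx y hy
  obtain ⟨a, b, γ, hab, hγc, hγK, hγa, hγb, hfin⟩ := hconn x hx y hy
  have hbd : BoundedVariationOn γ (Icc a b) := hfin
  have hlbd : LocallyBoundedVariationOn γ (Icc a b) := hbd.locallyBoundedVariationOn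
  have haI : a ∈ Icc a b := ⟨le_refl a, hab⟩
  have hbI : b ∈ Icc a b := ⟨hab, le_refl b⟩
  -- distance bounded by variation
  have hdistvar : ∀ u ∈ Icc a b, ∀ v ∈ Icc a b, u ≤ v →
      ‖γ v - γ u‖ ≤ variationOnFromTo γ (Icc a b) u v := by
    intro u hu v hv huv
    have h1 : edist (γ u) (γ v) ≤ eVariationOn γ (Icc a b ∩ Icc u v) :=
      eVariationOn.edist_le γ ⟨hu, le_refl u, huv⟩ ⟨hv, huv, le_refl v⟩
    have h2 : eVariationOn γ (Icc a b ∩ Icc u v) ≠ ⊤ :=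
      fun h => hfin (top_le_iff.mp (h ▸ eVariationOn.mono γ inter_subset_left))
    rw [variationOnFromTo.eq_of_le γ _ huv]
    calc ‖γ v - γ u‖ = (edist (γ u) (γ v)).toReal := by
          rw [edist_dist, ENNReal.toReal_ofReal dist_nonneg, dist_eq_norm, norm_sub_rev]
      _ ≤ (eVariationOn γ (Icc a b ∩ Icc u v)).toReal :=
          ENNReal.toReal_le_toReal (edist_ne_top _ _) h2 |>.mpr h1
  -- key estimate
  have key : ∀ ε : ℝ, 0 < ε →
      |f (γ b) - f (γ a)| ≤ ε * variationOnFromTo γ (Icc a b) a b := by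
    intro ε hε
    set S := {t : ℝ | t ∈ Icc a b ∧
      |f (γ t) - f (γ a)| ≤ ε * variationOnFromTo γ (Icc a b) a t} with hSdef
    have haS : a ∈ S := ⟨haI, by simp [variationOnFromTo.self]⟩
    have hSne : S.Nonempty := ⟨a, haS⟩
    have hSbdd : BddAbove S := ⟨b, fun t ht => ht.1.2⟩
    set c := sSup S with hc
    have hcI : c ∈ Icc a b := ⟨le_csSup hSbdd haS, csSup_le hSne fun t ht => ht.1.2⟩
    have hmono := variationOnFromTo.monotoneOn hlbd haI
    have hcS : |f (γ c) - f (γ a)| ≤ ε * variationOnFromTo γ (Icc a b) a c := by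
      refine le_of_forall_pos_le_add fun η hη => ?_
      have hfγ : ContinuousWithinAt (f ∘ γ) (Icc a b) c := (hcont.comp hγc hγK) c hcI
      rw [Metric.continuousWithinAt_iff] at hfγ
      obtain ⟨δ', hδ', hd'⟩ := hfγ η hη
      obtain ⟨t, htS, htc⟩ : ∃ t ∈ S, c - δ' < t := by
        rcases exists_lt_of_lt_csSup hSne (show c - δ' < c by linarith) with ⟨t, ht, h⟩
        exact ⟨t, ht, h⟩
      have htle : t ≤ c := le_csSup hSbdd htS
      have hdist : dist t c < δ' := by rw [Real.dist_eq, abs_of_nonpos (by linarith)]; linarith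
      have h5 := hd' htS.1 hdist
      rw [Real.dist_eq] at h5
      calc |f (γ c) - f (γ a)| ≤ |f (γ t) - f (γ c)| + |f (γ t) - f (γ a)| := by
            rw [abs_sub_comm (f (γ t)) (f (γ c))]; exact abs_sub_le _ _ _
        _ ≤ η + ε * variationOnFromTo γ (Icc a b) a t := by
            have := htS.2; simp only [Function.comp] at h5; linarith
        _ ≤ ε * variationOnFromTo γ (Icc a b) a c + η := by
            have := hmono htS.1 hcI htle; nlinarith
    have hcb : c = b := by
      by_contra hne
      have hcb : c < b := lt_of_le_of_ne hcI.2 hne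
      obtain ⟨δ, hδ, hd⟩ := hloc (γ c) (hγK hcI) ε hε
      have hγcont : ContinuousWithinAt γ (Icc a b) c := hγc c hcI
      rw [Metric.continuousWithinAt_iff] at hγcont
      obtain ⟨η, hη, hdγ⟩ := hγcont δ hδ
      set t₀ := min (c + η / 2) b with ht₀def
      have hct₀ : c < t₀ := lt_min (by linarith) hcb
      have ht₀I : t₀ ∈ Icc a b := ⟨hcI.1.trans hct₀.le, min_le_right _ _⟩
      have hdist : dist t₀ c < η := by
        rw [Real.dist_eq, abs_of_pos (by linarith)]
        have := min_le_left (c + η / 2) b; linarith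
      have h6 := hd (γ t₀) (hγK ht₀I) (hdγ ht₀I hdist)
      have h7 : ‖γ t₀ - γ c‖ ≤ variationOnFromTo γ (Icc a b) c t₀ :=
        hdistvar c hcI t₀ ht₀I hct₀.le
      have h8 : |f (γ t₀) - f (γ a)| ≤ ε * variationOnFromTo γ (Icc a b) a t₀ := by
        have hadd := variationOnFromTo.add hlbd haI hcI ht₀I
        calc |f (γ t₀) - f (γ a)| ≤ |f (γ t₀) - f (γ c)| + |f (γ c) - f (γ a)| :=
              abs_sub_le _ _ _
          _ ≤ ε * variationOnFromTo γ (Icc a b) c t₀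
              + ε * variationOnFromTo γ (Icc a b) a c := by nlinarith
          _ = ε * variationOnFromTo γ (Icc a b) a t₀ := by rw [← hadd]; ring
      have : t₀ ≤ c := le_csSup hSbdd ⟨ht₀I, h8⟩
      linarith
    rw [hcb] at hcS; exact hcS
  -- conclude
  have hC : 0 ≤ variationOnFromTo γ (Icc a b) a b := variationOnFromTo.nonneg_of_le γ _ hab
  set C := variationOnFromTo γ (Icc a b) a b
  have habs : |f (γ b) - f (γ a)| ≤ 0 := by
    by_contra h
    push_neg at h
    have := key (|f (γ b) - f (γ a)| / (2 * (C + 1))) (by positivity)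
    rw [div_mul_eq_mul_div, le_div_iff₀ (by positivity)] at this
    nlinarith
  have : f (γ b) = f (γ a) := by
    have := abs_nonpos_iff.mp habs; linarith
  rw [← hγa, ← hγb, this]
end
end

section
/- Let K ⊆ ℝ^d be a compact set, let f : K → ℝ admit a continuous derivative df on K, and let γ : [a,b] → K be a Lipschitz path. Then, with γ' denoting the almost-everywhere existing derivative of γ (which exists by Rademacher's theorem and satisfies γ(β) − γ(α) = ∫_α^β γ'(t) dt), one has ∫_a^b ⟨df(γ(t)), γ'(t)⟩ dt = f(γ(b)) − f(γ(a)). -/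
open Set Filter Topology MeasureTheory
open scoped NNReal ENNReal

noncomputable section

/-- FTC for Lipschitz real functions with a.e. derivative. -/
lemma lip_ftc (g : ℝ → ℝ) (L : ℝ≥0) (hg : LipschitzWith L g) {u v : ℝ} (huv : u ≤ v)
    (g' : ℝ → ℝ)
    (hd : ∀ᵐ t ∂(volume.restrict (Icc u v)), HasDerivAt g (g' t) t) :
    ∫ t in u..v, g' t = g v - g u := by
  rcases eq_or_lt_of_le huv with rfl | hlt
  · simp
  set h : ℕ → ℝ := fun n => ((n : ℝ) + 1)⁻¹ with hh
  have hpos : ∀ n, 0 < h n := fun n => by positivity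
  have hto : Tendsto h atTop (𝓝 0) := by
    simpa [hh, one_div] using tendsto_one_div_add_atTop_nhds_zero_nat (𝕜 := ℝ)
  set q : ℕ → ℝ → ℝ := fun n t => (g (t + h n) - g t) * ((n : ℝ) + 1) with hq
  have hqcont : ∀ n, Continuous (q n) :=
    fun n => ((hg.continuous.comp (continuous_id.add continuous_const)).sub
      hg.continuous).mul continuous_const
  -- pointwise convergence
  have hlim : ∀ᵐ t ∂(volume.restrict (Icc u v)), Tendsto (fun n => q n t) atTop (𝓝 (g' t)) := by
    filter_upwards [hd] with t ht
    have hslope := hasDerivAt_iff_tendsto_slope.1 ht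
    have hseq : Tendsto (fun n => t + h n) atTop (𝓝[≠] t) := by
      apply tendsto_nhdsWithin_of_tendsto_nhds_of_eventually_within
      · simpa using tendsto_const_nhds.add hto
      · exact Eventually.of_forall fun n => by simp [ne_of_gt, (hpos n).ne']
    refine (hslope.comp hseq).congr fun n => ?_
    simp only [Function.comp, slope_def_field, hq, add_sub_cancel_left, hh, div_inv_eq_mul]
  -- uniform bound
  have hqbd : ∀ n, ∀ t : ℝ, |q n t| ≤ (L : ℝ) := by
    intro n t
    have := hg.dist_le_mul (t + h n) t
    rw [Real.dist_eq, Real.dist_eq] at this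
    have h1 : |g (t + h n) - g t| ≤ L * h n := by
      simpa [abs_of_pos (hpos n)] using this
    calc |q n t| = |g (t + h n) - g t| * ((n:ℝ)+1) := by
          rw [hq, abs_mul, abs_of_pos (by positivity : (0:ℝ) < (n:ℝ)+1)]
      _ ≤ (L * h n) * ((n:ℝ)+1) := by
          apply mul_le_mul_of_nonneg_right h1; positivity
      _ = L := by rw [hh]; field_simp
  -- dominated convergence
  have hDCT : Tendsto (fun n => ∫ t in Icc u v, q n t) atTop (𝓝 (∫ t in Icc u v, g' t)) := by
    apply MeasureTheory.tendsto_integral_of_dominated_convergence (fun _ => (L : ℝ))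
    · exact fun n => ((hqcont n).aestronglyMeasurable).restrict
    · exact integrable_const _
    · exact fun n => Eventually.of_forall fun t => by
        simpa [Real.norm_eq_abs] using hqbd n t
    · exact hlim
  -- compute the integral of q n
  have hint : ∀ n, ∫ t in Icc u v, q n t = ((n:ℝ)+1) * ((∫ t in v..(v + h n), g t) - ∫ t in u..(u + h n), g t) := by
    intro n
    have hgi : ∀ x y : ℝ, IntervalIntegrable g volume x y :=
      fun x y => hg.continuous.intervalIntegrable x y
    have e1 : ∫ t in Icc u v, q n t = ∫ t in u..v, q n t := by
      rw [intervalIntegral.integral_of_le huv, MeasureTheory.integral_Icc_eq_integral_Ioc]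
    rw [e1, hq]
    have : ∫ t in u..v, (g (t + h n) - g t) * ((n:ℝ)+1)
        = (((∫ t in u..v, g (t + h n)) - ∫ t in u..v, g t)) * ((n:ℝ)+1) := by
      rw [← intervalIntegral.integral_sub, intervalIntegral.integral_mul_const]
      · exact (hg.continuous.comp (continuous_id.add continuous_const)).intervalIntegrable u v
      · exact hgi u v
    rw [this, intervalIntegral.integral_comp_add_right]
    have e2 : (∫ t in (u + h n)..(v + h n), g t)
        = (∫ t in u..(v + h n), g t) - ∫ t in u..(u + h n), g t :=
      (intervalIntegral.integral_interval_sub_left (hgi _ _) (hgi _ _)).symm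
    have e3 : (∫ t in u..v, g t) = (∫ t in u..(v + h n), g t) - ∫ t in v..(v + h n), g t := by
      rw [eq_sub_iff_add_eq, intervalIntegral.integral_add_adjacent_intervals (hgi _ _) (hgi _ _)]
    rw [e2, e3]; ring
  -- limits of boundary averages
  have key : ∀ w : ℝ, Tendsto (fun n : ℕ => ((n:ℝ)+1) * ∫ t in w..(w + h n), g t) atTop (𝓝 (g w)) := by
    intro w
    have hF : HasDerivAt (fun x => ∫ t in w..x, g t) (g w) w :=
      intervalIntegral.integral_hasDerivAt_right (hg.continuous.intervalIntegrable _ _)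
        (hg.continuous.stronglyMeasurableAtFilter _ _) hg.continuous.continuousAt
    have hslope := hasDerivAt_iff_tendsto_slope.1 hF
    have hseq : Tendsto (fun n => w + h n) atTop (𝓝[≠] w) := by
      apply tendsto_nhdsWithin_of_tendsto_nhds_of_eventually_within
      · simpa using tendsto_const_nhds.add hto
      · exact Eventually.of_forall fun n => by simp [ne_of_gt, (hpos n).ne']
    refine (hslope.comp hseq).congr fun n => ?_
    simp only [Function.comp, slope_def_field, add_sub_cancel_left, hh, div_inv_eq_mul,
      intervalIntegral.integral_same, sub_zero]
    ring
  have hRHS : Tendsto (fun n => ∫ t in Icc u v, q n t) atTop (𝓝 (g v - g u)) := by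
    have := (key v).sub (key u)
    refine this.congr fun n => ?_
    rw [hint n]; ring
  have hmain : ∫ t in Icc u v, g' t = g v - g u := tendsto_nhds_unique hDCT hRHS
  rw [intervalIntegral.integral_of_le huv, ← MeasureTheory.integral_Icc_eq_integral_Ioc, hmain]

/-- A local increment bound propagates to a global one, by continuous induction. -/
lemma local_to_global {φ : ℝ → ℝ} {a b M : ℝ} (hab : a ≤ b)
    (hcont : ContinuousOn φ (Icc a b))
    (hloc : ∀ τ ∈ Icc a b, ∃ δ > (0:ℝ), ∀ u v : ℝ, u ∈ Icc a b → v ∈ Icc a b →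
      u ≤ τ → τ ≤ v → v - u ≤ δ → |φ v - φ u| ≤ M * (v - u)) :
    |φ b - φ a| ≤ M * (b - a) := by
  set S : Set ℝ := {t ∈ Icc a b | |φ t - φ a| ≤ M * (t - a)} with hS
  have haS : a ∈ S := by
    refine ⟨left_mem_Icc.2 hab, ?_⟩; simp
  have hSclosed : IsClosed S := by
    have : S = Icc a b ∩ (fun t => |φ t - φ a| - M * (t - a)) ⁻¹' (Iic 0) := by
      ext t; simp [hS, sub_nonpos]
    rw [this]
    refine ContinuousOn.preimage_isClosed_of_isClosed ?_ isClosed_Icc isClosed_Iic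
    exact ((hcont.sub continuousOn_const).abs.sub
      (continuousOn_const.mul (continuousOn_id.sub continuousOn_const)))
  have hbdd : BddAbove S := BddAbove.mono (fun t ht => ht.1) (bddAbove_Icc)
  have hne : S.Nonempty := ⟨a, haS⟩
  set c := sSup S with hc
  have hcS : c ∈ S := hSclosed.csSup_mem hne hbdd
  have hcIcc : c ∈ Icc a b := hcS.1
  have hcb : c = b := by
    by_contra hne'
    have hcb : c < b := lt_of_le_of_ne hcIcc.2 hne'
    obtain ⟨δ, hδ, hδp⟩ := hloc c hcIcc
    set v := min (c + δ) b with hv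
    have hcv : c < v := lt_min (by linarith) hcb
    have hvIcc : v ∈ Icc a b := ⟨le_trans hcIcc.1 hcv.le, min_le_right _ _⟩
    have hvc : v - c ≤ δ := by
      have := min_le_left (c + δ) b; simp only [hv]; linarith
    have h1 : |φ v - φ c| ≤ M * (v - c) := hδp c v hcIcc hvIcc le_rfl hcv.le hvc
    have hvS : v ∈ S := by
      refine ⟨hvIcc, ?_⟩
      calc |φ v - φ a| ≤ |φ v - φ c| + |φ c - φ a| := by
            have := abs_sub_le (φ v) (φ c) (φ a); linarith
        _ ≤ M * (v - c) + M * (c - a) := add_le_add h1 hcS.2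
        _ = M * (v - a) := by ring
    exact absurd (le_csSup hbdd hvS) (not_le.2 hcv)
  have := hcS.2
  rwa [hcb] at this

/-- A function admitting a derivative on `K` is continuous on `K`. -/
lemma isDerivOn_continuousOn {d : ℕ} {K : Set (EuclideanSpace ℝ (Fin d))}
    {f : EuclideanSpace ℝ (Fin d) → ℝ} {df : EuclideanSpace ℝ (Fin d) → EuclideanSpace ℝ (Fin d)}
    (h : IsDerivOn K f df) : ContinuousOn f K := by
  intro x hx
  have h1 : Tendsto f (𝓝[K \ {x}] x) (𝓝 (f x)) := by
    have hq := h x hx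
    have hnorm : Tendsto (fun y : EuclideanSpace ℝ (Fin d) => ‖y - x‖) (𝓝[K \ {x}] x) (𝓝 0) := by
      have : Tendsto (fun y : EuclideanSpace ℝ (Fin d) => ‖y - x‖) (𝓝 x) (𝓝 ‖x - x‖) :=
        ((continuous_id.sub continuous_const).norm).continuousAt
      simpa using this.mono_left nhdsWithin_le_nhds
    have hinner : Tendsto (fun y : EuclideanSpace ℝ (Fin d) => (inner ℝ (df x) (y - x) : ℝ))
        (𝓝[K \ {x}] x) (𝓝 0) := by
      have : Continuous (fun y : EuclideanSpace ℝ (Fin d) => (inner ℝ (df x) (y - x) : ℝ)) :=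
        (innerSL ℝ (df x)).continuous.comp (continuous_id.sub continuous_const)
      have := this.continuousAt (x := x)
      simp only [ContinuousAt, sub_self, inner_zero_right] at this
      exact this.mono_left nhdsWithin_le_nhds
    have hmul := hq.mul hnorm
    rw [mul_zero] at hmul
    have hcongr : Tendsto (fun y => f y - f x) (𝓝[K \ {x}] x) (𝓝 0) := by
      have hsum := hmul.add hinner
      rw [add_zero] at hsum
      refine hsum.congr' ?_
      filter_upwards [self_mem_nhdsWithin] with y hy
      have hyx : y ≠ x := hy.2
      have : ‖y - x‖ ≠ 0 := by
        simp [sub_eq_zero, hyx]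
      field_simp; ring
    have := hcongr.add (tendsto_const_nhds (x := f x))
    simpa using this
  have h2 : Tendsto f (𝓝[{x}] x) (𝓝 (f x)) := by
    rw [nhdsWithin_singleton]
    exact tendsto_pure_nhds f x
  have hsub : 𝓝[K] x ≤ 𝓝[K \ {x}] x ⊔ 𝓝[{x}] x := by
    rw [← nhdsWithin_union]
    exact nhdsWithin_mono x (fun y hy => by
      by_cases hxy : y = x
      · exact Or.inr (by simp [hxy])
      · exact Or.inl ⟨hy, hxy⟩)
  exact (Tendsto.sup h1 h2).mono_left hsub

set_option maxHeartbeats 2000000 in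
/-- **Fundamental theorem of calculus along Lipschitz paths.** If `df` is a continuous
derivative of `f` on the compact set `K` and `γ : [a,b] → K` is a Lipschitz path with
almost-everywhere derivative `γ'`, then `∫_a^b ⟪df (γ t), γ' t⟫ dt = f (γ b) - f (γ a)`. -/
theorem ftc_lipschitz_path {d : ℕ} (K : Set (EuclideanSpace ℝ (Fin d)))
    (hK : IsCompact K)
    (f : EuclideanSpace ℝ (Fin d) → ℝ)
    (df : EuclideanSpace ℝ (Fin d) → EuclideanSpace ℝ (Fin d))
    (hdf : IsDerivOn K f df) (hdfc : ContinuousOn df K)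
    (a b : ℝ) (hab : a ≤ b)
    (γ : ℝ → EuclideanSpace ℝ (Fin d)) (C : ℝ≥0)
    (hγlip : LipschitzOnWith C γ (Icc a b)) (hγK : MapsTo γ (Icc a b) K)
    (γ' : ℝ → EuclideanSpace ℝ (Fin d))
    (hγ' : ∀ᵐ t ∂(volume.restrict (Icc a b)), HasDerivWithinAt γ (γ' t) (Icc a b) t) :
    ∫ t in a..b, (inner ℝ (df (γ t)) (γ' t) : ℝ) = f (γ b) - f (γ a) := by
  rcases eq_or_lt_of_le hab with rfl | hlt
  · simp
  -- the clamped extension of γ to all of ℝ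
  set p : ℝ → ℝ := fun t => max a (min b t) with hp
  have hpmem : ∀ t, p t ∈ Icc a b := fun t => ⟨le_max_left _ _, max_le hab (min_le_left _ _)⟩
  have hpeq : ∀ t ∈ Icc a b, p t = t := fun t ht => by
    simp only [hp]; rw [min_eq_right ht.2, max_eq_right ht.1]
  have hplip : LipschitzWith 1 p := (LipschitzWith.id.const_min b).const_max a
  set Γ : ℝ → EuclideanSpace ℝ (Fin d) := fun t => γ (p t) with hΓdef
  have hΓlip : LipschitzWith C Γ := by
    have h1 := hγlip.comp ((hplip.lipschitzOnWith (s := univ))) (fun t _ => hpmem t)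
    rw [mul_one] at h1
    exact lipschitzOnWith_univ.1 h1
  have hΓeq : ∀ t ∈ Icc a b, Γ t = γ t := fun t ht => by rw [hΓdef]; simp only [hpeq t ht]
  have hΓK : ∀ t, Γ t ∈ K := fun t => hγK (hpmem t)
  have hΓcont : Continuous Γ := hΓlip.continuous
  -- almost everywhere facts
  have haeIoo : ∀ᵐ t ∂(volume.restrict (Icc a b)), t ∈ Ioo a b := by
    have h1 : ∀ᵐ t ∂(volume.restrict (Icc a b)), t ∈ Icc a b :=
      ae_restrict_mem measurableSet_Icc
    have h2 : ∀ᵐ t ∂(volume.restrict (Icc a b)), t ≠ a ∧ t ≠ b := by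
      refine ae_restrict_of_ae ?_
      have ha : (volume : Measure ℝ) {a} = 0 := measure_singleton a
      have hb : (volume : Measure ℝ) {b} = 0 := measure_singleton b
      have hsub : {t : ℝ | ¬(t ≠ a ∧ t ≠ b)} ⊆ {a} ∪ {b} := by
        intro t ht
        simp only [mem_setOf_eq, not_and_or, not_not] at ht
        rcases ht with h | h <;> simp [h]
      exact ae_iff.2 (measure_mono_null hsub (measure_union_null ha hb))
    filter_upwards [h1, h2] with t h1 h2
    exact ⟨lt_of_le_of_ne h1.1 (Ne.symm h2.1), lt_of_le_of_ne h1.2 h2.2⟩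
  have hΓderiv : ∀ᵐ t ∂(volume.restrict (Icc a b)), HasDerivAt Γ (γ' t) t := by
    filter_upwards [hγ', haeIoo] with t ht hIoo
    have h1 : HasDerivWithinAt Γ (γ' t) (Icc a b) t :=
      ht.congr (fun y hy => hΓeq y hy) (hΓeq t (Ioo_subset_Icc_self hIoo))
    exact h1.hasDerivAt (Icc_mem_nhds hIoo.1 hIoo.2)
  have hγ'bd : ∀ᵐ t ∂(volume.restrict (Icc a b)), ‖γ' t‖ ≤ C := by
    filter_upwards [hΓderiv] with t ht
    have hs := (hasDerivAt_iff_tendsto_slope.1 ht).norm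
    refine le_of_tendsto hs ?_
    filter_upwards [self_mem_nhdsWithin] with y hy
    have hyt : y ≠ t := hy
    have : ‖Γ y - Γ t‖ ≤ C * |y - t| := by
      have := hΓlip.dist_le_mul y t
      rwa [dist_eq_norm, Real.dist_eq] at this
    rw [slope_def_module, norm_smul, norm_inv, Real.norm_eq_abs]
    rw [inv_mul_le_iff₀ (by simp [abs_pos, sub_ne_zero.2 hyt])]
    calc ‖Γ y - Γ t‖ ≤ C * |y - t| := this
      _ = |y - t| * C := mul_comm _ _
  have hγ'meas : AEStronglyMeasurable γ' (volume.restrict (Icc a b)) := by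
    set h : ℕ → ℝ := fun n => ((n : ℝ) + 1)⁻¹ with hh
    have hpos : ∀ n, 0 < h n := fun n => by positivity
    have hto : Tendsto h atTop (𝓝 0) := by
      simpa [hh, one_div] using tendsto_one_div_add_atTop_nhds_zero_nat (𝕜 := ℝ)
    set q : ℕ → ℝ → EuclideanSpace ℝ (Fin d) :=
      fun n t => ((n : ℝ) + 1) • (Γ (t + h n) - Γ t) with hq
    have hqcont : ∀ n, Continuous (q n) := fun n => by
      simp only [hq]; fun_prop
    apply aestronglyMeasurable_of_tendsto_ae atTop
      (fun n => (hqcont n).aestronglyMeasurable.restrict)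
    filter_upwards [hΓderiv] with t ht
    have hslope := hasDerivAt_iff_tendsto_slope.1 ht
    have hseq : Tendsto (fun n => t + h n) atTop (𝓝[≠] t) := by
      apply tendsto_nhdsWithin_of_tendsto_nhds_of_eventually_within
      · simpa using tendsto_const_nhds.add hto
      · exact Eventually.of_forall fun n => by simp [ne_of_gt, (hpos n).ne']
    refine (hslope.comp hseq).congr fun n => ?_
    simp only [Function.comp, slope_def_module, add_sub_cancel_left, hh, hq, inv_inv]
  -- the integrand
  set θ : ℝ → ℝ := fun s => (inner ℝ (df (Γ s)) (γ' s) : ℝ) with hθ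
  obtain ⟨M, hM⟩ := hK.exists_bound_of_continuousOn hdfc
  have hM0 : 0 ≤ M := le_trans (norm_nonneg _) (hM (γ a) (hγK (left_mem_Icc.2 hab)))
  have hθmeas : AEStronglyMeasurable θ (volume.restrict (Icc a b)) :=
    AEStronglyMeasurable.inner
      ((hdfc.comp_continuous hΓcont hΓK).aestronglyMeasurable.restrict) hγ'meas
  have hθbd : ∀ᵐ s ∂(volume.restrict (Icc a b)), ‖θ s‖ ≤ M * C := by
    filter_upwards [hγ'bd] with s hs
    calc ‖θ s‖ ≤ ‖df (Γ s)‖ * ‖γ' s‖ := norm_inner_le_norm _ _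
      _ ≤ M * C := mul_le_mul (hM _ (hΓK s)) hs (norm_nonneg _) hM0
  have hθint : IntegrableOn θ (Icc a b) := by
    refine Integrable.mono' (integrable_const (M * C)) hθmeas hθbd
  have hθii : ∀ u v : ℝ, u ∈ Icc a b → v ∈ Icc a b → u ≤ v →
      IntervalIntegrable θ volume u v := by
    intro u v hu hv huv
    rw [intervalIntegrable_iff_integrableOn_Icc_of_le huv]
    exact hθint.mono_set (Icc_subset_Icc hu.1 hv.2)
  -- the function φ
  set φ : ℝ → ℝ := fun t => f (Γ t) - ∫ s in a..t, θ s with hφ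
  have hφcont : ContinuousOn φ (Icc a b) := by
    apply ContinuousOn.sub
    · exact (isDerivOn_continuousOn hdf).comp hΓcont.continuousOn (fun t _ => hΓK t)
    · have := intervalIntegral.continuousOn_primitive_interval (f := θ) (μ := volume) (a := a) (b := b) ?_
      · rwa [uIcc_of_le hab] at this
      · rwa [uIcc_of_le hab]
  -- the local estimate
  have hloc : ∀ ε > (0:ℝ), ∀ τ ∈ Icc a b, ∃ δ > (0:ℝ), ∀ u v : ℝ, u ∈ Icc a b → v ∈ Icc a b →
      u ≤ τ → τ ≤ v → v - u ≤ δ → |φ v - φ u| ≤ (ε * (2 * C + 1)) * (v - u) := by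
    intro ε hε τ hτ
    set x₀ := γ τ with hx₀def
    have hx₀ : x₀ ∈ K := hγK hτ
    -- δ₁ from the derivative of f at x₀
    have hd := hdf x₀ hx₀
    rw [Metric.tendsto_nhdsWithin_nhds] at hd
    obtain ⟨δ₁, hδ₁pos, hδ₁⟩ := hd ε hε
    have hest : ∀ y ∈ K, ‖y - x₀‖ < δ₁ →
        |f y - f x₀ - (inner ℝ (df x₀) (y - x₀) : ℝ)| ≤ ε * ‖y - x₀‖ := by
      intro y hy hlt'
      by_cases hyx : y = x₀
      · simp [hyx]
      · have h1 := hδ₁ (x := y) ⟨hy, hyx⟩ (by rwa [dist_eq_norm])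
        rw [Real.dist_eq, sub_zero, abs_div, abs_norm] at h1
        have h2 : (0:ℝ) < ‖y - x₀‖ := by
          simp [norm_pos_iff, sub_ne_zero.2 hyx]
        rw [div_lt_iff₀ h2] at h1
        linarith
    -- δ₂ from continuity of df ∘ Γ at τ
    have hcΓ : Continuous (fun s => df (Γ s)) := hdfc.comp_continuous hΓcont hΓK
    have hcτ := Metric.continuousAt_iff.1 (hcΓ.continuousAt (x := τ))
    obtain ⟨δ₂, hδ₂pos, hδ₂⟩ := hcτ ε hε
    set δ := min (δ₂ / 2) (δ₁ / (2 * (C + 1))) with hδdef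
    have hδpos : 0 < δ := by
      apply lt_min (by linarith)
      have : (0:ℝ) < C + 1 := by positivity
      positivity
    refine ⟨δ, hδpos, ?_⟩
    intro u v hu hv huτ hτv hvu
    have huv : u ≤ v := le_trans huτ hτv
    -- basic distance facts for points in [u,v]
    have hsubIcc : Icc u v ⊆ Icc a b := Icc_subset_Icc hu.1 hv.2
    have hdist : ∀ s ∈ Icc u v, |s - τ| ≤ v - u := by
      intro s hs
      rw [abs_sub_le_iff]
      constructor <;> linarith [hs.1, hs.2]
    have hγdist : ∀ s ∈ Icc u v, ‖γ s - x₀‖ < δ₁ := by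
      intro s hs
      have h1 : ‖γ s - γ τ‖ ≤ C * |s - τ| := by
        have := hγlip.dist_le_mul s (hsubIcc hs) τ hτ
        rwa [dist_eq_norm, Real.dist_eq] at this
      have h2 : |s - τ| ≤ δ := le_trans (hdist s hs) hvu
      have h3 : (C:ℝ) * δ < δ₁ := by
        have hδle : δ ≤ δ₁ / (2 * (C + 1)) := min_le_right _ _
        have hC1 : (0:ℝ) < C + 1 := by positivity
        calc (C:ℝ) * δ ≤ (C:ℝ) * (δ₁ / (2 * (C + 1))) :=
              mul_le_mul_of_nonneg_left hδle C.2
          _ < δ₁ := by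
              rw [mul_div_assoc']
              rw [div_lt_iff₀ (by positivity)]
              nlinarith [C.2]
      calc ‖γ s - x₀‖ ≤ C * |s - τ| := h1
        _ ≤ C * δ := mul_le_mul_of_nonneg_left h2 C.2
        _ < δ₁ := h3
    have hdfdist : ∀ s ∈ Icc u v, ‖df x₀ - df (Γ s)‖ ≤ ε := by
      intro s hs
      have h1 : dist s τ < δ₂ := by
        rw [Real.dist_eq]
        calc |s - τ| ≤ v - u := hdist s hs
          _ ≤ δ := hvu
          _ ≤ δ₂ / 2 := min_le_left _ _
          _ < δ₂ := by linarith
      have h2 := hδ₂ h1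
      have h3 : df (Γ τ) = df x₀ := by rw [hΓeq τ hτ]
      rw [h3, dist_eq_norm] at h2
      rw [← norm_neg]
      simp only [neg_sub]
      exact le_of_lt h2
    -- inner product FTC on [u, v]
    have hinner_ftc : ∫ s in u..v, (inner ℝ (df x₀) (γ' s) : ℝ)
        = (inner ℝ (df x₀) (γ v - γ u) : ℝ) := by
      have hlip_g : LipschitzWith (‖innerSL ℝ (df x₀)‖₊ * C) (fun t => (inner ℝ (df x₀) (Γ t) : ℝ)) :=
        (innerSL ℝ (df x₀)).lipschitz.comp hΓlip
      have hd_g : ∀ᵐ t ∂(volume.restrict (Icc u v)),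
          HasDerivAt (fun t => (inner ℝ (df x₀) (Γ t) : ℝ)) ((inner ℝ (df x₀) (γ' t) : ℝ)) t := by
        have hsub : ∀ᵐ t ∂(volume.restrict (Icc u v)), HasDerivAt Γ (γ' t) t :=
          ae_restrict_of_ae_restrict_of_subset hsubIcc hΓderiv
        filter_upwards [hsub] with t ht
        exact ((innerSL ℝ (df x₀)).hasFDerivAt.comp_hasDerivAt t ht)
      have := lip_ftc _ _ hlip_g huv _ hd_g
      rw [this, hΓeq v hv, hΓeq u hu, ← inner_sub_right]
    -- integrability of the constant-field integrand
    have hii2 : IntervalIntegrable (fun s => (inner ℝ (df x₀) (γ' s) : ℝ)) volume u v := by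
      rw [intervalIntegrable_iff_integrableOn_Icc_of_le huv]
      have hmeas : AEStronglyMeasurable (fun s => (inner ℝ (df x₀) (γ' s) : ℝ))
          (volume.restrict (Icc u v)) := by
        apply AEStronglyMeasurable.inner aestronglyMeasurable_const
        exact hγ'meas.mono_measure (Measure.restrict_mono hsubIcc le_rfl)
      refine Integrable.mono' (integrable_const (‖df x₀‖ * C)) hmeas ?_
      have hbd := ae_restrict_of_ae_restrict_of_subset hsubIcc hγ'bd
      filter_upwards [hbd] with s hs
      calc ‖(inner ℝ (df x₀) (γ' s) : ℝ)‖ ≤ ‖df x₀‖ * ‖γ' s‖ := norm_inner_le_norm _ _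
        _ ≤ ‖df x₀‖ * C := mul_le_mul_of_nonneg_left hs (norm_nonneg _)
    have hii1 : IntervalIntegrable θ volume u v := hθii u v hu hv huv
    -- split φ v - φ u
    have hsplit : φ v - φ u = (f (γ v) - f (γ u)) - ∫ s in u..v, θ s := by
      simp only [hφ]
      rw [hΓeq v hv, hΓeq u hu]
      have : (∫ s in a..v, θ s) - ∫ s in a..u, θ s = ∫ s in u..v, θ s :=
        intervalIntegral.integral_interval_sub_left
          (hθii a v (left_mem_Icc.2 hab) hv hv.1)
          (hθii a u (left_mem_Icc.2 hab) hu hu.1)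
      linarith [this]
    -- error bound on the integral term
    have hIdiff : |∫ s in u..v, ((inner ℝ (df x₀) (γ' s) : ℝ) - θ s)| ≤ (ε * C) * (v - u) := by
      have hbound : ∀ᵐ s ∂(volume.restrict (Set.uIoc u v)),
          ‖(inner ℝ (df x₀) (γ' s) : ℝ) - θ s‖ ≤ ε * C := by
        have h1 : Set.uIoc u v = Ioc u v := uIoc_of_le huv
        rw [h1]
        have hbd : ∀ᵐ s ∂(volume.restrict (Ioc u v)), ‖γ' s‖ ≤ C := by
          apply ae_restrict_of_ae_restrict_of_subset
            (subset_trans Ioc_subset_Icc_self hsubIcc) hγ'bd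
        have hmem : ∀ᵐ s ∂(volume.restrict (Ioc u v)), s ∈ Ioc u v :=
          ae_restrict_mem measurableSet_Ioc
        filter_upwards [hbd, hmem] with s hs hmem
        have hsIcc : s ∈ Icc u v := Ioc_subset_Icc_self hmem
        have : (inner ℝ (df x₀) (γ' s) : ℝ) - θ s = (inner ℝ (df x₀ - df (Γ s)) (γ' s) : ℝ) := by
          rw [hθ, inner_sub_left]
        rw [this]
        calc ‖(inner ℝ (df x₀ - df (Γ s)) (γ' s) : ℝ)‖ ≤ ‖df x₀ - df (Γ s)‖ * ‖γ' s‖ :=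
              norm_inner_le_norm _ _
          _ ≤ ε * C := by
              apply mul_le_mul ?_ hs (norm_nonneg _) hε.le
              have := hdfdist s hsIcc
              rwa [hΓeq s (hsubIcc hsIcc)] at this ⊢
      have := intervalIntegral.norm_integral_le_of_norm_le (g := fun _ => ε * (C:ℝ))
        huv (by rw [uIoc_of_le huv] at hbound; exact (ae_restrict_iff' measurableSet_Ioc).1 hbound)
        (by apply intervalIntegrable_const)
      rw [Real.norm_eq_abs] at this
      calc |∫ s in u..v, ((inner ℝ (df x₀) (γ' s) : ℝ) - θ s)| ≤ |∫ s in u..v, ε * (C:ℝ)| := this.trans (le_abs_self _)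
        _ = (ε * C) * (v - u) := by
            rw [intervalIntegral.integral_const, smul_eq_mul, abs_mul]
            rw [abs_of_nonneg (by linarith : (0:ℝ) ≤ v - u),
              abs_of_nonneg (by positivity : (0:ℝ) ≤ ε * (C:ℝ))]
            ring
    -- the two Taylor error bounds
    have hfv : |f (γ v) - f x₀ - (inner ℝ (df x₀) (γ v - x₀) : ℝ)| ≤ ε * C * (v - τ) := by
      have h1 := hest (γ v) (hγK hv) (hγdist v ⟨huv, le_rfl⟩)
      have h2 : ‖γ v - x₀‖ ≤ C * (v - τ) := by
        have := hγlip.dist_le_mul v hv τ hτ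
        rw [dist_eq_norm, Real.dist_eq, abs_of_nonneg (by linarith : (0:ℝ) ≤ v - τ)] at this
        exact this
      calc |f (γ v) - f x₀ - (inner ℝ (df x₀) (γ v - x₀) : ℝ)| ≤ ε * ‖γ v - x₀‖ := h1
        _ ≤ ε * (C * (v - τ)) := mul_le_mul_of_nonneg_left h2 hε.le
        _ = ε * C * (v - τ) := by ring
    have hfu : |f (γ u) - f x₀ - (inner ℝ (df x₀) (γ u - x₀) : ℝ)| ≤ ε * C * (τ - u) := by
      have h1 := hest (γ u) (hγK hu) (hγdist u ⟨le_rfl, huv⟩)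
      have h2 : ‖γ u - x₀‖ ≤ C * (τ - u) := by
        have := hγlip.dist_le_mul u hu τ hτ
        rw [dist_eq_norm, Real.dist_eq, abs_of_nonpos (by linarith : u - τ ≤ 0)] at this
        calc ‖γ u - x₀‖ ≤ C * -(u - τ) := this
          _ = C * (τ - u) := by ring
      calc |f (γ u) - f x₀ - (inner ℝ (df x₀) (γ u - x₀) : ℝ)| ≤ ε * ‖γ u - x₀‖ := h1
        _ ≤ ε * (C * (τ - u)) := mul_le_mul_of_nonneg_left h2 hε.le
        _ = ε * C * (τ - u) := by ring
    -- assemble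
    have hkey : φ v - φ u
        = (f (γ v) - f x₀ - (inner ℝ (df x₀) (γ v - x₀) : ℝ))
          - (f (γ u) - f x₀ - (inner ℝ (df x₀) (γ u - x₀) : ℝ))
          + ∫ s in u..v, ((inner ℝ (df x₀) (γ' s) : ℝ) - θ s) := by
      rw [hsplit]
      rw [intervalIntegral.integral_sub hii2 hii1, hinner_ftc]
      have : (inner ℝ (df x₀) (γ v - γ u) : ℝ)
          = (inner ℝ (df x₀) (γ v - x₀) : ℝ) - (inner ℝ (df x₀) (γ u - x₀) : ℝ) := by
        rw [← inner_sub_right]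
        congr 1
        abel
      rw [this]
      ring
    rw [hkey]
    have habs := abs_add_le
      ((f (γ v) - f x₀ - (inner ℝ (df x₀) (γ v - x₀) : ℝ))
        - (f (γ u) - f x₀ - (inner ℝ (df x₀) (γ u - x₀) : ℝ)))
      (∫ s in u..v, ((inner ℝ (df x₀) (γ' s) : ℝ) - θ s))
    have habs2 := abs_sub
      (f (γ v) - f x₀ - (inner ℝ (df x₀) (γ v - x₀) : ℝ))
      (f (γ u) - f x₀ - (inner ℝ (df x₀) (γ u - x₀) : ℝ))
    have hvu0 : (0:ℝ) ≤ v - u := by linarith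
    calc |((f (γ v) - f x₀ - (inner ℝ (df x₀) (γ v - x₀) : ℝ))
          - (f (γ u) - f x₀ - (inner ℝ (df x₀) (γ u - x₀) : ℝ)))
          + ∫ s in u..v, ((inner ℝ (df x₀) (γ' s) : ℝ) - θ s)|
        ≤ ε * C * (v - τ) + ε * C * (τ - u) + (ε * C) * (v - u) := by
          have := le_trans habs (add_le_add (le_trans habs2 (add_le_add hfv hfu)) hIdiff)
          linarith
      _ ≤ (ε * (2 * C + 1)) * (v - u) := by nlinarith [hε.le, C.2, hvu0]
  -- conclude φ b = φ a
  have hφeq : φ b = φ a := by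
    have hforall : ∀ ε > (0:ℝ), |φ b - φ a| ≤ (ε * (2 * C + 1)) * (b - a) := by
      intro ε hε
      exact local_to_global hab hφcont (hloc ε hε)
    have h0 : |φ b - φ a| ≤ 0 := by
      apply le_of_forall_pos_le_add
      intro ε' hε'
      set D := (2 * (C:ℝ) + 1) * (b - a) with hD
      have hD0 : 0 < D := by
        have : (0:ℝ) < 2 * (C:ℝ) + 1 := by positivity
        have : (0:ℝ) < b - a := by linarith
        positivity
      have := hforall (ε' / D) (by positivity)
      calc |φ b - φ a| ≤ (ε' / D * (2 * C + 1)) * (b - a) := this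
        _ = ε' := by field_simp [hD]; ring
        _ ≤ 0 + ε' := by linarith
    have := abs_nonneg (φ b - φ a)
    have : |φ b - φ a| = 0 := le_antisymm h0 this
    have := abs_eq_zero.1 this
    linarith [this]
  -- unfold
  have hfin : f (Γ b) - ∫ s in a..b, θ s = f (Γ a) - ∫ s in a..a, θ s := hφeq
  rw [intervalIntegral.integral_same, sub_zero, hΓeq b (right_mem_Icc.2 hab),
    hΓeq a (left_mem_Icc.2 hab)] at hfin
  have hcongr : ∫ t in a..b, (inner ℝ (df (γ t)) (γ' t) : ℝ) = ∫ s in a..b, θ s := by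
    apply intervalIntegral.integral_congr
    intro t ht
    rw [uIcc_of_le hab] at ht
    simp only [hθ, hΓeq t ht]
  rw [hcongr]
  linarith [hfin]
end
end

section
/- Let K = {(x,y) ∈ [−1,1]² : x ≤ 0, or x > 0 and |y| ≥ e^{−1/x}}, and define f : K → ℝ by f(x,y) = e^{−1/(2x)} if x > 0 and y > 0, and f(x,y) = 0 otherwise. Then f admits a continuous derivative on K (so f ∈ C¹(K)), but f is not Lipschitz continuous on K; in particular, there is no F ∈ C¹(ℝ²) with F|_K = f. -/
open Set Filter Topology MeasureTheory
open scoped NNReal ENNReal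

noncomputable section

/-- The inward-cusp domain
`K = {(x,y) ∈ [-1,1]² : x ≤ 0, or x > 0 and |y| ≥ e^{-1/x}}`. -/
def cuspSet : Set (EuclideanSpace ℝ (Fin 2)) :=
  {p | p 0 ∈ Icc (-1:ℝ) 1 ∧ p 1 ∈ Icc (-1:ℝ) 1 ∧
    (p 0 ≤ 0 ∨ (0 < p 0 ∧ Real.exp (-1 / p 0) ≤ |p 1|))}

open Classical in
/-- `f(x,y) = e^{-1/(2x)}` for `x > 0, y > 0`, and `f = 0` elsewhere. -/
def cuspFun : EuclideanSpace ℝ (Fin 2) → ℝ :=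
  fun p => if 0 < p 0 ∧ 0 < p 1 then Real.exp (-1 / (2 * p 0)) else 0


lemma abs_coord_le_norm (v : EuclideanSpace ℝ (Fin 2)) (i : Fin 2) : |v i| ≤ ‖v‖ := by
  rw [EuclideanSpace.norm_eq, ← Real.sqrt_sq_eq_abs]
  apply Real.sqrt_le_sqrt
  simp only [Real.norm_eq_abs, sq_abs]
  exact Finset.single_le_sum (f := fun j => v j ^ 2) (fun j _ => sq_nonneg _) (Finset.mem_univ i)

lemma abs_sub_coord_le_dist (q p : EuclideanSpace ℝ (Fin 2)) (i : Fin 2) :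
    |q i - p i| ≤ dist q p := by
  rw [dist_eq_norm]
  simpa [PiLp.sub_apply] using abs_coord_le_norm (q - p) i

lemma tendsto_mul_exp (n : ℕ) :
    Tendsto (fun u : ℝ => u ^ n * Real.exp (-(u / 2))) atTop (𝓝 0) := by
  have h := (Real.tendsto_pow_mul_exp_neg_atTop_nhds_zero n).comp
    (tendsto_id.atTop_div_const (two_pos (α := ℝ)))
  have h2 := h.const_mul ((2 : ℝ) ^ n)
  rw [mul_zero] at h2
  apply h2.congr
  intro u
  simp only [Function.comp]
  rw [← mul_assoc, ← mul_pow, mul_div_cancel₀ _ (two_ne_zero (α := ℝ))]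
  simp

lemma tendsto_aux (n : ℕ) :
    Tendsto (fun t : ℝ => Real.exp (-1 / (2 * t)) / t ^ n) (𝓝[>] (0:ℝ)) (𝓝 0) := by
  have h2 := (tendsto_mul_exp n).comp tendsto_inv_nhdsGT_zero
  apply h2.congr'
  filter_upwards [self_mem_nhdsWithin] with t ht
  have ht' : (t:ℝ) ≠ 0 := ne_of_gt ht
  simp only [Function.comp]
  have he : -1 / (2 * t) = -(t⁻¹ * 2⁻¹) := by field_simp
  rw [he]; ring

open Classical in
def d1 : EuclideanSpace ℝ (Fin 2) → ℝ :=
  fun p => if 0 < p 0 ∧ 0 < p 1 then Real.exp (-1 / (2 * p 0)) / (2 * p 0 ^ 2) else 0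

def cuspDf : EuclideanSpace ℝ (Fin 2) → EuclideanSpace ℝ (Fin 2) :=
  fun p => d1 p • EuclideanSpace.single (0 : Fin 2) (1:ℝ)

lemma inner_cuspDf (p v : EuclideanSpace ℝ (Fin 2)) :
    (inner ℝ (cuspDf p) v : ℝ) = d1 p * v 0 := by
  simp [cuspDf, real_inner_smul_left, EuclideanSpace.inner_single_left]

lemma cont_proj (i : Fin 2) :
    Continuous (fun q : EuclideanSpace ℝ (Fin 2) => q i) :=
  (EuclideanSpace.proj (𝕜 := ℝ) i).continuous

lemma contAt_proj (p : EuclideanSpace ℝ (Fin 2)) (i : Fin 2) :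
    ContinuousAt (fun q : EuclideanSpace ℝ (Fin 2) => q i) p :=
  (cont_proj i).continuousAt

lemma continuousOn_d1 : ContinuousOn d1 cuspSet := by
  intro p hp
  rcases lt_trichotomy (p 0) 0 with h0 | h0 | h0
  · -- p 0 < 0 : d1 = 0 near p
    apply ContinuousAt.continuousWithinAt
    have hU : {q : EuclideanSpace ℝ (Fin 2) | q 0 < 0} ∈ 𝓝 p :=
      (isOpen_lt (cont_proj 0) continuous_const).mem_nhds h0
    apply ContinuousAt.congr (continuousAt_const (y := (0:ℝ)))
    filter_upwards [hU] with q hq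
    simp [d1, not_lt.mpr (le_of_lt hq)]
  · -- p 0 = 0
    apply ContinuousAt.continuousWithinAt
    have hd1p : d1 p = 0 := by simp [d1, h0]
    rw [ContinuousAt, hd1p, Metric.tendsto_nhds]
    intro ε hε
    have := (tendsto_aux 2).eventually (eventually_abs_sub_lt 0 hε)
    rw [eventually_iff, Metric.mem_nhdsWithin_iff] at this
    obtain ⟨δ, hδ, hball⟩ := this
    rw [Metric.eventually_nhds_iff]
    refine ⟨δ, hδ, fun {q} hq => ?_⟩
    by_cases h : 0 < q 0 ∧ 0 < q 1
    · have hq0 : dist (q 0) (0:ℝ) < δ := by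
        rw [Real.dist_eq, sub_zero]
        calc |q 0| = |q 0 - p 0| := by rw [h0, sub_zero]
        _ ≤ dist q p := abs_sub_coord_le_dist q p 0
        _ < δ := hq
      have : |Real.exp (-1 / (2 * q 0)) / q 0 ^ 2 - 0| < ε := by
        apply hball
        constructor
        · exact Metric.mem_ball.mpr hq0
        · exact h.1
      rw [sub_zero] at this
      have he : d1 q = Real.exp (-1 / (2 * q 0)) / q 0 ^ 2 / 2 := by
        simp only [d1, if_pos h]; ring
      rw [Real.dist_eq, sub_zero, he]
      calc |Real.exp (-1 / (2 * q 0)) / q 0 ^ 2 / 2|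
          ≤ |Real.exp (-1 / (2 * q 0)) / q 0 ^ 2| := by
            rw [abs_div, abs_two]
            linarith [abs_nonneg (Real.exp (-1 / (2 * q 0)) / q 0 ^ 2)]
      _ < ε := this
    · rw [Real.dist_eq]
      simp [d1, if_neg h, hε]
  · -- p 0 > 0
    have h3 : 0 < p 0 ∧ Real.exp (-1 / p 0) ≤ |p 1| := by
      rcases hp.2.2 with h | h
      · exact absurd h0 (not_lt.mpr h)
      · exact h
    have hp1 : p 1 ≠ 0 := by
      intro hz
      have := h3.2
      rw [hz, abs_zero] at this
      exact absurd this (not_le.mpr (Real.exp_pos _))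
    rcases hp1.lt_or_gt with h1 | h1
    · -- p 1 < 0 : d1 = 0 near p
      apply ContinuousAt.continuousWithinAt
      have hU : {q : EuclideanSpace ℝ (Fin 2) | q 1 < 0} ∈ 𝓝 p :=
        (isOpen_lt (cont_proj 1) continuous_const).mem_nhds h1
      apply ContinuousAt.congr (continuousAt_const (y := (0:ℝ)))
      filter_upwards [hU] with q hq
      have : ¬ (0 < q 0 ∧ 0 < q 1) := fun hc => absurd hq (not_lt.mpr (le_of_lt hc.2))
      simp [d1, this]
    · -- p 1 > 0
      apply ContinuousAt.continuousWithinAt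
      have hU : {q : EuclideanSpace ℝ (Fin 2) | 0 < q 0 ∧ 0 < q 1} ∈ 𝓝 p := by
        have : IsOpen {q : EuclideanSpace ℝ (Fin 2) | 0 < q 0 ∧ 0 < q 1} :=
          (isOpen_lt continuous_const (cont_proj 0)).and
            (isOpen_lt continuous_const (cont_proj 1))
        exact this.mem_nhds ⟨h0, h1⟩
      have hc : ContinuousAt (fun q : EuclideanSpace ℝ (Fin 2) =>
          Real.exp (-1 / (2 * q 0)) / (2 * q 0 ^ 2)) p := by
        apply ContinuousAt.div
        · exact (Real.continuous_exp.continuousAt).comp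
            (ContinuousAt.div continuousAt_const
              (continuousAt_const.mul (contAt_proj p 0)) (by positivity))
        · exact continuousAt_const.mul ((contAt_proj p 0).pow 2)
        · positivity
      apply hc.congr
      filter_upwards [hU] with q hq
      simp [d1, if_pos hq]

lemma isDerivOn_of_hasFDeriv {d : ℕ} {K : Set (EuclideanSpace ℝ (Fin d))}
    {f : EuclideanSpace ℝ (Fin d) → ℝ}
    {df : EuclideanSpace ℝ (Fin d) → EuclideanSpace ℝ (Fin d)}
    (h : ∀ x ∈ K, HasFDerivWithinAt f (innerSL ℝ (df x)) K x) : IsDerivOn K f df := by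
  intro x hx
  have h2 := hasFDerivWithinAt_iff_tendsto.mp (h x hx)
  have h3 := h2.mono_left (nhdsWithin_mono x (Set.diff_subset (t := {x})))
  apply squeeze_zero_norm' ?_ h3
  apply Filter.Eventually.of_forall
  intro y
  have : (innerSL ℝ (df x)) (y - x) = (inner ℝ (df x) (y - x) : ℝ) := rfl
  rw [this, Real.norm_eq_abs, Real.norm_eq_abs, abs_div, abs_norm, div_eq_inv_mul]

lemma d1_eq_zero_of_not {p : EuclideanSpace ℝ (Fin 2)} (h : ¬ (0 < p 0 ∧ 0 < p 1)) :
    d1 p = 0 := by rw [d1, if_neg h]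

lemma innerSL_cuspDf_zero {p : EuclideanSpace ℝ (Fin 2)} (h : ¬ (0 < p 0 ∧ 0 < p 1)) :
    innerSL ℝ (cuspDf p) = (0 : EuclideanSpace ℝ (Fin 2) →L[ℝ] ℝ) := by
  have : cuspDf p = 0 := by rw [cuspDf, d1_eq_zero_of_not h, zero_smul]
  rw [this, map_zero]

lemma hasFDeriv_cusp : ∀ p ∈ cuspSet,
    HasFDerivWithinAt cuspFun (innerSL ℝ (cuspDf p)) cuspSet p := by
  intro p hp
  rcases lt_trichotomy (p 0) 0 with h0 | h0 | h0
  · -- p 0 < 0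
    have hU : {q : EuclideanSpace ℝ (Fin 2) | q 0 < 0} ∈ 𝓝 p :=
      (isOpen_lt (cont_proj 0) continuous_const).mem_nhds h0
    have heq : cuspFun =ᶠ[𝓝 p] fun _ => (0:ℝ) := by
      filter_upwards [hU] with q hq
      have : ¬ (0 < q 0 ∧ 0 < q 1) := fun hc => absurd hq (not_lt.mpr hc.1.le)
      rw [cuspFun, if_neg this]
    have h1 : HasFDerivAt cuspFun (0 : EuclideanSpace ℝ (Fin 2) →L[ℝ] ℝ) p :=
      (hasFDerivAt_const (0:ℝ) p).congr_of_eventuallyEq heq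
    rw [innerSL_cuspDf_zero (fun hc => absurd h0 (not_lt.mpr hc.1.le))]
    exact h1.hasFDerivWithinAt
  · -- p 0 = 0
    have hnot : ¬ (0 < p 0 ∧ 0 < p 1) := fun hc => (ne_of_gt hc.1) h0
    rw [innerSL_cuspDf_zero hnot]
    apply HasFDerivWithinAt.of_isLittleO
    rw [Asymptotics.isLittleO_iff]
    intro c hc
    have := (tendsto_aux 1).eventually (eventually_abs_sub_lt 0 hc)
    rw [eventually_iff, Metric.mem_nhdsWithin_iff] at this
    obtain ⟨δ, hδ, hball⟩ := this
    filter_upwards [mem_nhdsWithin_of_mem_nhds (Metric.ball_mem_nhds p hδ)] with y hy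
    have hfp : cuspFun p = 0 := by rw [cuspFun, if_neg hnot]
    rw [hfp, sub_zero, ContinuousLinearMap.zero_apply, sub_zero]
    by_cases h : 0 < y 0 ∧ 0 < y 1
    · have hy0d : y 0 ≤ dist y p := by
        calc y 0 ≤ |y 0 - p 0| := by rw [h0, sub_zero]; exact le_abs_self _
        _ ≤ dist y p := abs_sub_coord_le_dist y p 0
      have hy0 : y 0 < δ := lt_of_le_of_lt hy0d (Metric.mem_ball.mp hy)
      have hkey : |Real.exp (-1/(2 * y 0)) / y 0 ^ 1 - 0| < c := by
        apply hball
        constructor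
        · exact Metric.mem_ball.mpr (by rw [Real.dist_eq, sub_zero, abs_of_pos h.1]; exact hy0)
        · exact h.1
      rw [sub_zero, pow_one, abs_div, abs_of_pos h.1, abs_of_pos (Real.exp_pos _),
        div_lt_iff₀ h.1] at hkey
      rw [cuspFun, if_pos h, Real.norm_eq_abs, abs_of_pos (Real.exp_pos _)]
      calc Real.exp (-1/(2 * y 0)) ≤ c * y 0 := le_of_lt hkey
      _ ≤ c * ‖y - p‖ := by
          apply mul_le_mul_of_nonneg_left _ (le_of_lt hc)
          rw [← dist_eq_norm]; exact hy0d
    · rw [cuspFun, if_neg h, norm_zero]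
      positivity
  · -- p 0 > 0
    have h3 : 0 < p 0 ∧ Real.exp (-1 / p 0) ≤ |p 1| := by
      rcases hp.2.2 with h | h
      · exact absurd h0 (not_lt.mpr h)
      · exact h
    have hp1 : p 1 ≠ 0 := by
      intro hz
      rw [hz, abs_zero] at h3
      exact absurd h3.2 (not_le.mpr (Real.exp_pos _))
    rcases hp1.lt_or_gt with h1 | h1
    · -- p 1 < 0
      have hU : {q : EuclideanSpace ℝ (Fin 2) | q 1 < 0} ∈ 𝓝 p :=
        (isOpen_lt (cont_proj 1) continuous_const).mem_nhds h1
      have heq : cuspFun =ᶠ[𝓝 p] fun _ => (0:ℝ) := by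
        filter_upwards [hU] with q hq
        have : ¬ (0 < q 0 ∧ 0 < q 1) := fun hc => absurd hq (not_lt.mpr hc.2.le)
        rw [cuspFun, if_neg this]
      have hfd : HasFDerivAt cuspFun (0 : EuclideanSpace ℝ (Fin 2) →L[ℝ] ℝ) p :=
        (hasFDerivAt_const (0:ℝ) p).congr_of_eventuallyEq heq
      rw [innerSL_cuspDf_zero (fun hc => absurd h1 (not_lt.mpr hc.2.le))]
      exact hfd.hasFDerivWithinAt
    · -- p 0 > 0, p 1 > 0
      have hU : {q : EuclideanSpace ℝ (Fin 2) | 0 < q 0 ∧ 0 < q 1} ∈ 𝓝 p := by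
        have : IsOpen {q : EuclideanSpace ℝ (Fin 2) | 0 < q 0 ∧ 0 < q 1} :=
          (isOpen_lt continuous_const (cont_proj 0)).and
            (isOpen_lt continuous_const (cont_proj 1))
        exact this.mem_nhds ⟨h0, h1⟩
      have hne : p 0 ≠ 0 := ne_of_gt h0
      have h1d : HasDerivAt (fun x : ℝ => -1/(2*x)) ((2 * (p 0) ^ 2)⁻¹) (p 0) := by
        have h := (hasDerivAt_inv hne).const_mul (-1/2 : ℝ)
        have he : (fun x : ℝ => -1/2 * x⁻¹) = fun x : ℝ => -1/(2*x) := by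
          funext x
          rcases eq_or_ne x 0 with rfl | hx
          · simp
          · field_simp
        rw [he] at h
        refine h.congr_deriv ?_
        rw [mul_inv]
        ring
      have hexp := h1d.exp
      have hproj := (EuclideanSpace.proj (𝕜 := ℝ) (0 : Fin 2)).hasFDerivAt (x := p)
      have hcomp := hexp.comp_hasFDerivAt p hproj
      have hfd := hcomp.congr_of_eventuallyEq (f₁ := cuspFun) ?_
      · have hL : innerSL ℝ (cuspDf p) =
            (Real.exp (-1/(2 * p 0)) * (2 * p 0 ^ 2)⁻¹) •
              (EuclideanSpace.proj (𝕜 := ℝ) (0 : Fin 2)) := by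
          apply ContinuousLinearMap.ext
          intro v
          have hv : innerSL ℝ (cuspDf p) v = (inner ℝ (cuspDf p) v : ℝ) := rfl
          rw [hv, inner_cuspDf]
          have hd : d1 p = Real.exp (-1 / (2 * p 0)) / (2 * p 0 ^ 2) := by
            rw [d1, if_pos ⟨h0, h1⟩]
          rw [hd]
          have hvv : (EuclideanSpace.proj (𝕜 := ℝ) (0 : Fin 2)) v = v 0 := rfl
          simp only [ContinuousLinearMap.smul_apply, hvv, smul_eq_mul]
          ring
        rw [hL]
        exact hfd.hasFDerivWithinAt
      · filter_upwards [hU] with q hq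
        simp only [Function.comp, cuspFun, if_pos hq, PiLp.proj_apply]

lemma cusp_not_lip : ¬ ∃ C : ℝ≥0, LipschitzOnWith C cuspFun cuspSet := by
  rintro ⟨C, hC⟩
  set T : ℝ := max 1 (Real.log (2 * C + 1) + 1) with hT
  have hT1 : (1:ℝ) ≤ T := le_max_left _ _
  have hT0 : (0:ℝ) < T := lt_of_lt_of_le one_pos hT1
  set x : ℝ := 1 / (2 * T) with hxdef
  have hx0 : 0 < x := by positivity
  have hx1 : x ≤ 1 := by
    rw [hxdef, div_le_one (by positivity)]
    linarith
  set e : ℝ := Real.exp (-1 / x) with hedef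
  have he0 : 0 < e := Real.exp_pos _
  have he1 : e ≤ 1 := Real.exp_le_one_iff.mpr (by rw [neg_div, neg_nonpos]; positivity)
  set a : EuclideanSpace ℝ (Fin 2) := !₂[x, e] with ha
  set b : EuclideanSpace ℝ (Fin 2) := !₂[x, -e] with hb
  have ha0 : a 0 = x := rfl
  have ha1 : a 1 = e := rfl
  have hb0 : b 0 = x := rfl
  have hb1 : b 1 = -e := rfl
  have haK : a ∈ cuspSet := by
    refine ⟨?_, ?_, Or.inr ⟨?_, ?_⟩⟩
    · rw [ha0]; constructor <;> linarith
    · rw [ha1]; constructor <;> linarith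
    · rw [ha0]; exact hx0
    · rw [ha0, ha1, abs_of_pos he0]
  have hbK : b ∈ cuspSet := by
    refine ⟨?_, ?_, Or.inr ⟨?_, ?_⟩⟩
    · rw [hb0]; constructor <;> linarith
    · rw [hb1]; constructor <;> linarith
    · rw [hb0]; exact hx0
    · rw [hb0, hb1, abs_neg, abs_of_pos he0]
  have hfa : cuspFun a = Real.exp (-1 / (2 * x)) := by
    rw [cuspFun, if_pos ⟨by rw [ha0]; exact hx0, by rw [ha1]; exact he0⟩, ha0]
  have hfb : cuspFun b = 0 := by
    rw [cuspFun, if_neg]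
    rintro ⟨-, h⟩
    rw [hb1] at h
    linarith
  have hdist : dist a b = 2 * e := by
    rw [EuclideanSpace.dist_eq, Fin.sum_univ_two, ha0, ha1, hb0, hb1]
    rw [dist_self, Real.dist_eq, sub_neg_eq_add]
    have : (0:ℝ) ^ 2 + |e + e| ^ 2 = (2 * e) ^ 2 := by rw [sq_abs]; ring
    rw [this, Real.sqrt_sq (by positivity)]
  have hlip := hC.dist_le_mul a haK b hbK
  rw [hfa, hfb, hdist, Real.dist_eq, sub_zero, abs_of_pos (Real.exp_pos _)] at hlip
  -- exp (-1/(2x)) ≤ C * (2 e)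
  have hsplit : Real.exp (-1 / (2 * x)) = e * Real.exp (1 / (2 * x)) := by
    rw [hedef, ← Real.exp_add]
    congr 1
    field_simp
    ring
  rw [hsplit] at hlip
  have h2 : Real.exp (1 / (2 * x)) ≤ 2 * C := by
    have := (mul_le_mul_iff_right₀ he0).mp (by linarith : e * Real.exp (1 / (2 * x)) ≤ e * (2 * C))
    linarith
  have hxT : 1 / (2 * x) = T := by
    rw [hxdef]
    field_simp
  rw [hxT] at h2
  have h3 : Real.log (2 * C + 1) ≤ T := by
    have := le_max_right (1:ℝ) (Real.log (2 * C + 1) + 1)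
    linarith
  have h4 : (2 * (C:ℝ) + 1) ≤ Real.exp T := by
    rw [← Real.exp_log (by positivity : (0:ℝ) < 2 * C + 1)]
    exact Real.exp_le_exp.mpr h3
  linarith

lemma cuspSet_subset_ball : cuspSet ⊆ Metric.closedBall (0 : EuclideanSpace ℝ (Fin 2)) 2 := by
  intro p hp
  rw [Metric.mem_closedBall, dist_zero_right, EuclideanSpace.norm_eq, Fin.sum_univ_two]
  have h0 : |p 0| ≤ 1 := abs_le.mpr ⟨hp.1.1, hp.1.2⟩
  have h1 : |p 1| ≤ 1 := abs_le.mpr ⟨hp.2.1.1, hp.2.1.2⟩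
  have : ‖p 0‖ ^ 2 + ‖p 1‖ ^ 2 ≤ 4 := by
    rw [Real.norm_eq_abs, Real.norm_eq_abs]
    nlinarith [abs_nonneg (p 0), abs_nonneg (p 1)]
  calc Real.sqrt (‖p 0‖ ^ 2 + ‖p 1‖ ^ 2) ≤ Real.sqrt 4 := Real.sqrt_le_sqrt this
  _ = 2 := by
      rw [show (4:ℝ) = 2 ^ 2 by norm_num, Real.sqrt_sq (by norm_num)]

/-- The cusp function is in `C¹(K)` but is not Lipschitz on `K`; in particular it is
not the restriction to `K` of any `C¹` function on `ℝ²`. -/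
theorem cusp_example :
    (∃ df, ContinuousOn df cuspSet ∧ IsDerivOn cuspSet cuspFun df) ∧
    (¬ ∃ C : ℝ≥0, LipschitzOnWith C cuspFun cuspSet) ∧
    (¬ ∃ F : EuclideanSpace ℝ (Fin 2) → ℝ, ContDiff ℝ 1 F ∧ EqOn F cuspFun cuspSet) := by
  refine ⟨⟨cuspDf, ?_, ?_⟩, cusp_not_lip, ?_⟩
  · exact continuousOn_d1.smul continuousOn_const
  · exact isDerivOn_of_hasFDeriv hasFDeriv_cusp
  · rintro ⟨F, hF, hEq⟩
    apply cusp_not_lip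
    have hcont : Continuous (fderiv ℝ F) := hF.continuous_fderiv one_ne_zero
    obtain ⟨M, hM⟩ := (isCompact_closedBall (0 : EuclideanSpace ℝ (Fin 2))
      2).exists_bound_of_continuousOn hcont.continuousOn
    have hlip : LipschitzOnWith M.toNNReal F (Metric.closedBall 0 2) := by
      apply Convex.lipschitzOnWith_of_nnnorm_fderiv_le
        (fun x _ => (hF.differentiable one_ne_zero).differentiableAt) ?_ (convex_closedBall _ _)
      intro x hx
      rw [← NNReal.coe_le_coe, coe_nnnorm, Real.coe_toNNReal']
      exact (hM x hx).trans (le_max_left _ _)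
    refine ⟨M.toNNReal, fun q hq r hr => ?_⟩
    rw [← hEq hq, ← hEq hr]
    exact (hlip.mono cuspSet_subset_ball) hq hr
end
end

section
/- Let K ⊆ ℝ^d be a compact set with infinitely many connected components. Then the normed space (C¹(K), ‖·‖_{C¹(K)}) is not complete; concretely, there exists a sequence (f_n) in C¹(K) that is Cauchy for the norm ‖·‖_{C¹(K)} but has no limit in C¹(K) with respect to this norm. -/
open Set Filter Topology MeasureTheory
open scoped NNReal ENNReal

noncomputable section

/-- Sup norm of a function on `K`. -/
def supNormOn {d : ℕ} {α : Type*} [Norm α] (K : Set (EuclideanSpace ℝ (Fin d)))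
    (g : EuclideanSpace ℝ (Fin d) → α) : ℝ :=
  sSup ((fun z => ‖g z‖) '' K)

/-- `f ∈ C¹(K)`: `f` admits a continuous derivative on `K`. -/
def MemC1 {d : ℕ} (K : Set (EuclideanSpace ℝ (Fin d)))
    (f : EuclideanSpace ℝ (Fin d) → ℝ) : Prop :=
  ∃ df, ContinuousOn df K ∧ IsDerivOn K f df

/-- The quotient norm `‖f‖_{C¹(K)} = ‖f‖_K + inf {‖df‖_K : df a continuous derivative of f}`. -/
def c1Norm {d : ℕ} (K : Set (EuclideanSpace ℝ (Fin d)))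
    (f : EuclideanSpace ℝ (Fin d) → ℝ) : ℝ :=
  supNormOn K f +
    sInf {r | ∃ df, ContinuousOn df K ∧ IsDerivOn K f df ∧ r = supNormOn K df}

/-- A sequence of functions that is Cauchy with respect to the `C¹(K)` norm. -/
def C1Cauchy {d : ℕ} (K : Set (EuclideanSpace ℝ (Fin d)))
    (f : ℕ → EuclideanSpace ℝ (Fin d) → ℝ) : Prop :=
  ∀ ε > (0:ℝ), ∃ N : ℕ, ∀ m ≥ N, ∀ n ≥ N, c1Norm K (f m - f n) < ε

/-- Completeness of `(C¹(K), ‖·‖_{C¹(K)})`: every Cauchy sequence of `C¹(K)` functions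
converges in the `C¹(K)` norm to a `C¹(K)` function. -/
def C1Complete {d : ℕ} (K : Set (EuclideanSpace ℝ (Fin d))) : Prop :=
  ∀ f : ℕ → EuclideanSpace ℝ (Fin d) → ℝ, (∀ n, MemC1 K (f n)) → C1Cauchy K f →
    ∃ g, MemC1 K g ∧ Filter.Tendsto (fun n => c1Norm K (f n - g)) Filter.atTop (𝓝 0)

/-- The set of connected components of `K`. -/
def comps {d : ℕ} (K : Set (EuclideanSpace ℝ (Fin d))) : Set (Set (EuclideanSpace ℝ (Fin d))) :=
  {C | ∃ x ∈ K, C = connectedComponentIn K x}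

section AuxLemmas

variable {d : ℕ} {K : Set (EuclideanSpace ℝ (Fin d))}

lemma supNormOn_nonneg {α : Type*} [SeminormedAddGroup α] (g : EuclideanSpace ℝ (Fin d) → α) :
    0 ≤ supNormOn K g :=
  Real.sSup_nonneg (by rintro r ⟨z, _, rfl⟩; exact norm_nonneg _)

lemma isDerivOn_of_locallyConst {F : EuclideanSpace ℝ (Fin d) → ℝ}
    (h : ∀ x ∈ K, ∀ᶠ y in 𝓝[K] x, F y = F x) : IsDerivOn K F 0 := by
  intro x hx
  have h' : ∀ᶠ y in 𝓝[K \ {x}] x, F y = F x :=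
    (h x hx).filter_mono (nhdsWithin_mono x diff_subset)
  refine Filter.Tendsto.congr' ?_ (tendsto_const_nhds (x := (0:ℝ)) (f := 𝓝[K \ {x}] x))
  filter_upwards [h'] with y hy
  simp [hy]

lemma continuousOn_of_locallyConst {F : EuclideanSpace ℝ (Fin d) → ℝ}
    (h : ∀ x ∈ K, ∀ᶠ y in 𝓝[K] x, F y = F x) : ContinuousOn F K := by
  intro x hx
  exact Filter.Tendsto.congr' ((h x hx).mono fun y hy => hy.symm) tendsto_const_nhds

lemma continuousOn_of_isDerivOn {f : EuclideanSpace ℝ (Fin d) → ℝ}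
    {df : EuclideanSpace ℝ (Fin d) → EuclideanSpace ℝ (Fin d)}
    (h : IsDerivOn K f df) : ContinuousOn f K := by
  intro x hx
  have hq := h x hx
  have hnorm : Tendsto (fun y : EuclideanSpace ℝ (Fin d) => ‖y - x‖) (𝓝[K \ {x}] x) (𝓝 0) := by
    have h1 : Tendsto (fun y : EuclideanSpace ℝ (Fin d) => ‖y - x‖) (𝓝 x) (𝓝 ‖x - x‖) :=
      ((continuous_id.sub continuous_const).norm).tendsto x
    simpa using h1.mono_left nhdsWithin_le_nhds
  have hinner : Tendsto (fun y : EuclideanSpace ℝ (Fin d) => (inner ℝ (df x) (y - x) : ℝ))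
      (𝓝[K \ {x}] x) (𝓝 0) := by
    have hc : Continuous fun y : EuclideanSpace ℝ (Fin d) => (inner ℝ (df x) (y - x) : ℝ) :=
      continuous_const.inner (continuous_id.sub continuous_const)
    have h1 := hc.tendsto x
    simp only [sub_self, inner_zero_right] at h1
    exact h1.mono_left nhdsWithin_le_nhds
  have key : Tendsto f (𝓝[K \ {x}] x) (𝓝 (f x)) := by
    have h1 : Tendsto (fun y => ((f y - f x - (inner ℝ (df x) (y - x) : ℝ)) / ‖y - x‖) * ‖y - x‖
        + (inner ℝ (df x) (y - x) : ℝ) + f x) (𝓝[K \ {x}] x) (𝓝 (0 * 0 + 0 + f x)) :=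
      ((hq.mul hnorm).add hinner).add tendsto_const_nhds
    rw [show (0 : ℝ) * 0 + 0 + f x = f x by ring] at h1
    refine h1.congr' ?_
    filter_upwards [eventually_mem_nhdsWithin] with y hy
    have hyx : y ≠ x := fun h => hy.2 (by simp [h])
    have hn : ‖y - x‖ ≠ 0 := by simpa [sub_eq_zero] using hyx
    field_simp
    ring
  have hsub : K ⊆ (K \ {x}) ∪ {x} := fun z hz => by
    by_cases h' : z = x
    · exact Or.inr (by simp [h'])
    · exact Or.inl ⟨hz, h'⟩
  have hle : 𝓝[K] x ≤ 𝓝[(K \ {x}) ∪ {x}] x := nhdsWithin_mono x hsub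
  rw [nhdsWithin_union] at hle
  refine Filter.Tendsto.mono_left ?_ hle
  exact tendsto_sup.mpr ⟨key, by rw [nhdsWithin_singleton]; exact tendsto_pure_nhds f x⟩

/-- `S` is relatively clopen in `K`, phrased ambiently. -/
def KClopen (K S : Set (EuclideanSpace ℝ (Fin d))) : Prop :=
  IsClosed S ∧ ∃ O, IsOpen O ∧ S = O ∩ K

lemma KClopen.subset {S : Set (EuclideanSpace ℝ (Fin d))} (h : KClopen K S) : S ⊆ K := by
  obtain ⟨-, O, -, rfl⟩ := h
  exact inter_subset_right

lemma kclopen_empty : KClopen K (∅ : Set (EuclideanSpace ℝ (Fin d))) :=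
  ⟨isClosed_empty, ∅, isOpen_empty, (empty_inter K).symm⟩

lemma KClopen.union {A B : Set (EuclideanSpace ℝ (Fin d))}
    (hA : KClopen K A) (hB : KClopen K B) : KClopen K (A ∪ B) := by
  obtain ⟨hAc, OA, hOA, rfl⟩ := hA
  obtain ⟨hBc, OB, hOB, rfl⟩ := hB
  exact ⟨hAc.union hBc, OA ∪ OB, hOA.union hOB, (union_inter_distrib_right OA OB K).symm⟩

lemma KClopen.diff {A B : Set (EuclideanSpace ℝ (Fin d))}
    (hA : KClopen K A) (hB : KClopen K B) : KClopen K (A \ B) := by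
  obtain ⟨hAc, OA, hOA, hAeq⟩ := hA
  obtain ⟨hBc, OB, hOB, hBeq⟩ := hB
  constructor
  · have : A \ B = A ∩ OBᶜ := by
      rw [hBeq]; ext z; simp only [mem_diff, mem_inter_iff, mem_compl_iff]
      constructor
      · rintro ⟨hzA, hz⟩
        exact ⟨hzA, fun hO => hz ⟨hO, (hAeq ▸ hzA : z ∈ OA ∩ K).2⟩⟩
      · rintro ⟨hzA, hz⟩
        exact ⟨hzA, fun h => hz h.1⟩
    rw [this]
    exact hAc.inter (isClosed_compl_iff.mpr hOB)
  · refine ⟨OA ∩ Bᶜ, hOA.inter (isClosed_compl_iff.mp ?_), ?_⟩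
    · simpa using hBc
    · rw [hAeq]
      ext z
      simp only [mem_diff, mem_inter_iff, mem_compl_iff]
      tauto

lemma KClopen.indicator_eventuallyEq {S : Set (EuclideanSpace ℝ (Fin d))}
    (hS : KClopen K S) {x : EuclideanSpace ℝ (Fin d)} (hx : x ∈ K) :
    ∀ᶠ y in 𝓝[K] x, S.indicator (fun _ => (1:ℝ)) y = S.indicator (fun _ => (1:ℝ)) x := by
  by_cases hxS : x ∈ S
  · obtain ⟨hc, O, hO, rfl⟩ := hS
    have hO' : ∀ᶠ y in 𝓝[K] x, y ∈ O :=
      eventually_nhdsWithin_of_eventually_nhds (hO.eventually_mem hxS.1)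
    filter_upwards [hO', eventually_mem_nhdsWithin] with y h1 h2
    rw [Set.indicator_of_mem (show y ∈ O ∩ K from ⟨h1, h2⟩), Set.indicator_of_mem hxS]
  · have hO' : ∀ᶠ y in 𝓝[K] x, y ∈ Sᶜ :=
      eventually_nhdsWithin_of_eventually_nhds (hS.1.isOpen_compl.eventually_mem hxS)
    filter_upwards [hO'] with y h1
    rw [indicator_of_notMem h1, indicator_of_notMem hxS]

lemma exists_kclopen (hK : IsCompact K) {p q : EuclideanSpace ℝ (Fin d)}
    (hp : p ∈ K) (hq : q ∈ K)
    (hne : connectedComponentIn K p ≠ connectedComponentIn K q) :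
    ∃ S, KClopen K S ∧ p ∈ S ∧ q ∉ S := by
  haveI : CompactSpace K := isCompact_iff_compactSpace.mp hK
  have hq' : (⟨q, hq⟩ : K) ∉ connectedComponent (⟨p, hp⟩ : K) := by
    intro h
    apply hne
    rw [connectedComponentIn_eq_image hp, connectedComponentIn_eq_image hq,
      connectedComponent_eq h]
  rw [connectedComponent_eq_iInter_isClopen] at hq'
  simp only [mem_iInter, not_forall] at hq'
  obtain ⟨⟨Z, hZc, hpZ⟩, hqZ⟩ := hq'
  refine ⟨Subtype.val '' Z, ⟨?_, ?_⟩, ⟨⟨p, hp⟩, hpZ, rfl⟩, ?_⟩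
  · exact ((hZc.1.isCompact).image continuous_subtype_val).isClosed
  · obtain ⟨O, hO, hZO⟩ := isOpen_induced_iff.mp hZc.2
    refine ⟨O, hO, ?_⟩
    rw [← hZO, Subtype.image_preimage_coe]
    exact inter_comm _ _
  · rintro ⟨z, hz, hzq⟩
    exact hqZ (by rwa [show z = (⟨q, hq⟩ : K) from Subtype.ext hzq] at hz)

end AuxLemmas

/-- If a compact set `K` has infinitely many connected components, then
`(C¹(K), ‖·‖_{C¹(K)})` is not complete: there is a Cauchy sequence in `C¹(K)` having
no limit in `C¹(K)` for this norm. -/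
theorem not_complete_of_infinitely_many_components {d : ℕ}
    (K : Set (EuclideanSpace ℝ (Fin d))) (hK : IsCompact K)
    (hinf : (comps K).Infinite) :
    ∃ f : ℕ → EuclideanSpace ℝ (Fin d) → ℝ,
      (∀ n, MemC1 K (f n)) ∧ C1Cauchy K f ∧
      ¬ ∃ g, MemC1 K g ∧
        Filter.Tendsto (fun n => c1Norm K (f n - g)) Filter.atTop (𝓝 0) := by
  classical
  -- points in pairwise distinct components
  obtain e := hinf.natEmbedding
  choose x hxK hxc using fun n => (e n).2
  have compinj : ∀ i j, connectedComponentIn K (x i) = connectedComponentIn K (x j) → i = j := by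
    intro i j h
    exact e.injective (Subtype.ext (by rw [hxc i, hxc j, h]))
  obtain ⟨xs, hxsK, φ, hφ, hconv⟩ := hK.tendsto_subseq hxK
  -- accumulation property
  have hacc : ∀ ε : ℝ, 0 < ε → ∃ y, y ∈ K ∧ 0 < dist y xs ∧ dist y xs < ε ∧
      connectedComponentIn K y ≠ connectedComponentIn K xs := by
    intro ε hε
    have hev : ∀ᶠ n in atTop, dist ((x ∘ φ) n) xs < ε := Metric.tendsto_nhds.mp hconv ε hε
    obtain ⟨N, hN⟩ := eventually_atTop.mp hev
    have hBsub : {n : ℕ | connectedComponentIn K (x (φ n)) = connectedComponentIn K xs}.Subsingleton :=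
      fun i hi j hj => hφ.injective (compinj _ _ (hi.trans hj.symm))
    obtain ⟨n, hn⟩ := ((Set.Ici_infinite N).diff hBsub.finite).nonempty
    refine ⟨x (φ n), hxK _, ?_, hN n hn.1, fun h => hn.2 h⟩
    rw [dist_pos]
    intro h
    exact hn.2 (show connectedComponentIn K (x (φ n)) = _ by rw [h])
  clear hconv hφ compinj hxc hxK
  choose gf hg1 hg2 hg3 hg4 using hacc
  set y : ℕ → EuclideanSpace ℝ (Fin d) := fun n => gf (1/((n:ℝ)+1)) (by positivity) with hy
  have hyK : ∀ n, y n ∈ K := fun n => hg1 _ _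
  have hypos : ∀ n, 0 < dist (y n) xs := fun n => hg2 _ _
  have hyne : ∀ n, connectedComponentIn K (y n) ≠ connectedComponentIn K xs := fun n => hg4 _ _
  have hlt : ∀ n, dist (y n) xs < 1/((n:ℝ)+1) := fun n => hg3 _ _
  -- separating relatively clopen sets
  have hsep : ∀ k, ∃ S, KClopen K S ∧ y k ∈ S ∧ xs ∉ S :=
    fun k => exists_kclopen hK (hyK k) hxsK (hyne k)
  choose V hVc hVy hVxs using hsep
  set W : ℕ → Set (EuclideanSpace ℝ (Fin d)) := fun k => V k \ ⋃ j ∈ Finset.range k, V j with hW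
  have hUc : ∀ k, KClopen K (⋃ j ∈ Finset.range k, V j) := by
    intro k
    induction k with
    | zero => simpa using kclopen_empty
    | succ k ih =>
      have : (⋃ j ∈ Finset.range (k+1), V j) = (⋃ j ∈ Finset.range k, V j) ∪ V k := by
        rw [Finset.range_add_one]
        simp [Set.biUnion_insert, Set.union_comm]
      rw [this]
      exact ih.union (hVc k)
  have hWc : ∀ k, KClopen K (W k) := fun k => (hVc k).diff (hUc k)
  have hWV : ∀ k, W k ⊆ V k := fun k => diff_subset
  have hxsW : ∀ k, xs ∉ W k := fun k h => hVxs k (hWV k h)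
  have hWdisj : ∀ i k, i < k → ∀ z, z ∈ W k → z ∉ W i := by
    intro i k hik z hzk hzi
    exact hzk.2 (Set.mem_biUnion (Finset.mem_range.mpr hik) (hWV i hzi))
  -- the index of the first V containing y j
  have hex : ∀ j, ∃ i, y j ∈ V i := fun j => ⟨j, hVy j⟩
  set m : ℕ → ℕ := fun j => Nat.find (hex j) with hm
  have hm_le : ∀ j, m j ≤ j := fun j => Nat.find_min' _ (hVy j)
  have hym : ∀ j, y j ∈ W (m j) := by
    intro j
    refine ⟨Nat.find_spec (hex j), ?_⟩
    intro hmem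
    obtain ⟨i, hi, hyi⟩ := Set.mem_iUnion₂.mp hmem
    exact Nat.find_min (hex j) (Finset.mem_range.mp hi) hyi
  -- the coefficients and the functions
  set a : ℕ → ℝ := fun k => Real.sqrt (1/((k:ℝ)+1)) with ha
  have ha_pos : ∀ k, 0 < a k := fun k => Real.sqrt_pos.mpr (by positivity)
  have ha_anti : ∀ {i j : ℕ}, i ≤ j → a j ≤ a i := by
    intro i j hij
    apply Real.sqrt_le_sqrt
    apply one_div_le_one_div_of_le (by positivity)
    have : (i:ℝ) ≤ (j:ℝ) := Nat.cast_le.mpr hij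
    linarith
  have ha_to0 : Tendsto a atTop (𝓝 0) := by
    have h0 : Tendsto (fun n : ℕ => 1/((n:ℝ)+1)) atTop (𝓝 0) :=
      tendsto_one_div_add_atTop_nhds_zero_nat
    have h1 := (Real.continuous_sqrt.tendsto 0).comp h0
    rw [Real.sqrt_zero] at h1
    exact h1
  have hsa : ∀ k, Real.sqrt (dist (y k) xs) ≤ a k :=
    fun k => Real.sqrt_le_sqrt (hlt k).le
  set F : ℕ → EuclideanSpace ℝ (Fin d) → ℝ :=
    fun n z => ∑ k ∈ Finset.range n, a k * (W k).indicator (fun _ => (1:ℝ)) z with hF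
  -- local constancy
  have hFloc : ∀ n, ∀ x' ∈ K, ∀ᶠ y' in 𝓝[K] x', F n y' = F n x' := by
    intro n x' hx'
    have hev : ∀ᶠ y' in 𝓝[K] x', ∀ k ∈ Finset.range n,
        (W k).indicator (fun _ => (1:ℝ)) y' = (W k).indicator (fun _ => (1:ℝ)) x' :=
      (eventually_all_finset (Finset.range n)).mpr fun k _ => (hWc k).indicator_eventuallyEq hx'
    filter_upwards [hev] with y' hy'
    exact Finset.sum_congr rfl fun k hk => by rw [hy' k hk]
  have hFmem : ∀ n, MemC1 K (F n) :=
    fun n => ⟨0, continuousOn_const, isDerivOn_of_locallyConst (hFloc n)⟩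
  have hFc : ∀ n, ContinuousOn (F n) K := fun n => continuousOn_of_locallyConst (hFloc n)
  -- pointwise values
  have hFxs : ∀ n, F n xs = 0 := by
    intro n
    refine Finset.sum_eq_zero fun k _ => ?_
    rw [Set.indicator_of_notMem (hxsW k), mul_zero]
  have hFyj : ∀ j n, j < n → F n (y j) = a (m j) := by
    intro j n hjn
    have hFnval : F n (y j) = ∑ k ∈ Finset.range n,
        a k * (W k).indicator (fun _ => (1:ℝ)) (y j) := rfl
    rw [hFnval, Finset.sum_eq_single_of_mem (m j) (Finset.mem_range.mpr (lt_of_le_of_lt (hm_le j) hjn))]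
    · rw [Set.indicator_of_mem (hym j), mul_one]
    · intro b _ hbne
      rcases lt_or_gt_of_ne hbne with hb | hb
      · rw [Set.indicator_of_notMem (hWdisj b (m j) hb (y j) (hym j)), mul_zero]
      · rw [Set.indicator_of_notMem (fun h => hWdisj (m j) b hb (y j) h (hym j)), mul_zero]
  -- pointwise bound on differences
  have hptbd : ∀ (n' m' : ℕ), n' ≤ m' → ∀ z, |F m' z - F n' z| ≤ a n' := by
    intro n' m' hle z
    have hsum : F m' z - F n' z = ∑ k ∈ Finset.Ico n' m',
        a k * (W k).indicator (fun _ => (1:ℝ)) z := by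
      rw [Finset.sum_Ico_eq_sub _ hle]
    have hterm_nonneg : ∀ k, 0 ≤ a k * (W k).indicator (fun _ => (1:ℝ)) z :=
      fun k => mul_nonneg (ha_pos k).le (Set.indicator_nonneg (fun _ _ => zero_le_one) z)
    have hnn : 0 ≤ F m' z - F n' z := hsum ▸ Finset.sum_nonneg fun k _ => hterm_nonneg k
    rw [abs_of_nonneg hnn, hsum]
    by_cases hz : ∃ k ∈ Finset.Ico n' m', z ∈ W k
    · obtain ⟨k₀, hk₀, hzk₀⟩ := hz
      rw [Finset.sum_eq_single_of_mem k₀ hk₀]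
      · rw [Set.indicator_of_mem hzk₀, mul_one]
        exact ha_anti (Finset.mem_Ico.mp hk₀).1
      · intro b _ hbne
        rcases lt_or_gt_of_ne hbne with hb | hb
        · rw [Set.indicator_of_notMem (hWdisj b k₀ hb z hzk₀), mul_zero]
        · rw [Set.indicator_of_notMem (fun h => hWdisj k₀ b hb z h hzk₀), mul_zero]
    · push_neg at hz
      rw [Finset.sum_eq_zero fun k hk => by
        rw [Set.indicator_of_notMem (hz k hk), mul_zero]]
      exact (ha_pos n').le
  have hsupbd : ∀ (N m' n' : ℕ), N ≤ m' → N ≤ n' → supNormOn K (F m' - F n') ≤ a N := by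
    intro N m' n' hm' hn'
    refine Real.sSup_le ?_ (ha_pos N).le
    rintro r ⟨z, hz, rfl⟩
    show ‖(F m' - F n') z‖ ≤ a N
    rw [show (F m' - F n') z = F m' z - F n' z from rfl, Real.norm_eq_abs]
    rcases le_total n' m' with h | h
    · exact (hptbd n' m' h z).trans (ha_anti hn')
    · rw [abs_sub_comm]
      exact (hptbd m' n' h z).trans (ha_anti hm')
  -- the sInf term vanishes for differences
  have hKne : K.Nonempty := ⟨xs, hxsK⟩
  have hsup0 : supNormOn K (0 : EuclideanSpace ℝ (Fin d) → EuclideanSpace ℝ (Fin d)) = 0 := by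
    unfold supNormOn
    have : (fun z : EuclideanSpace ℝ (Fin d) =>
        ‖(0 : EuclideanSpace ℝ (Fin d) → EuclideanSpace ℝ (Fin d)) z‖) = fun _ => (0:ℝ) := by
      funext z; simp
    rw [this, Set.Nonempty.image_const hKne, csSup_singleton]
  have hsInf0 : ∀ m' n', sInf {r | ∃ df, ContinuousOn df K ∧
      IsDerivOn K (F m' - F n') df ∧ r = supNormOn K df} = 0 := by
    intro m' n'
    have hloc : ∀ x' ∈ K, ∀ᶠ y' in 𝓝[K] x', (F m' - F n') y' = (F m' - F n') x' := by
      intro x' hx'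
      filter_upwards [hFloc m' x' hx', hFloc n' x' hx'] with y' h1 h2
      simp only [Pi.sub_apply, h1, h2]
    have hmem : (0:ℝ) ∈ {r | ∃ df, ContinuousOn df K ∧
        IsDerivOn K (F m' - F n') df ∧ r = supNormOn K df} :=
      ⟨0, continuousOn_const, isDerivOn_of_locallyConst hloc, hsup0.symm⟩
    refine le_antisymm (csInf_le ⟨0, ?_⟩ hmem) (Real.sInf_nonneg ?_)
    · rintro r ⟨df, -, -, rfl⟩
      exact supNormOn_nonneg df
    · rintro r ⟨df, -, -, rfl⟩
      exact supNormOn_nonneg df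
  -- Cauchy
  have hcauchy : C1Cauchy K F := by
    intro ε hε
    obtain ⟨N, hN⟩ := (ha_to0.eventually (gt_mem_nhds hε)).exists_forall_of_atTop
    refine ⟨N, fun m' hm' n' hn' => ?_⟩
    have : c1Norm K (F m' - F n') = supNormOn K (F m' - F n') + sInf {r | ∃ df,
        ContinuousOn df K ∧ IsDerivOn K (F m' - F n') df ∧ r = supNormOn K df} := rfl
    rw [this, hsInf0 m' n', add_zero]
    exact lt_of_le_of_lt (hsupbd N m' n' hm' hn') (hN N le_rfl)
  -- no limit
  have hnolimit : ¬ ∃ g, MemC1 K g ∧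
      Tendsto (fun n => c1Norm K (F n - g)) atTop (𝓝 0) := by
    rintro ⟨g, ⟨dg, hdgc, hdgd⟩, hconv2⟩
    have hgK : ContinuousOn g K := continuousOn_of_isDerivOn hdgd
    -- sup norm of F n - g tends to 0
    have hle : ∀ n, supNormOn K (F n - g) ≤ c1Norm K (F n - g) := by
      intro n
      refine le_add_of_nonneg_right (Real.sInf_nonneg ?_)
      rintro r ⟨df, -, -, rfl⟩
      exact supNormOn_nonneg df
    have hsup_to0 : Tendsto (fun n => supNormOn K (F n - g)) atTop (𝓝 0) :=
      squeeze_zero (fun n => supNormOn_nonneg _) hle hconv2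
    -- pointwise convergence
    have hpt : ∀ z ∈ K, ∀ n, |F n z - g z| ≤ supNormOn K (F n - g) := by
      intro z hz n
      have hcont : ContinuousOn (fun w => ‖(F n - g) w‖) K := ((hFc n).sub hgK).norm
      have hbdd : BddAbove ((fun w => ‖(F n - g) w‖) '' K) :=
        (hK.image_of_continuousOn hcont).bddAbove
      have := le_csSup hbdd (Set.mem_image_of_mem _ hz)
      simpa [Real.norm_eq_abs, supNormOn] using this
    have hlim : ∀ z ∈ K, Tendsto (fun n => F n z - g z) atTop (𝓝 0) :=
      fun z hz => squeeze_zero_norm (fun n => by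
        simpa [Real.norm_eq_abs] using hpt z hz n) hsup_to0
    -- values of g
    have hgxs : g xs = 0 := by
      have h1 := hlim xs hxsK
      have h2 : (fun n => F n xs - g xs) = fun _ => -g xs := by
        funext n; rw [hFxs n]; ring
      rw [h2] at h1
      have := tendsto_nhds_unique h1 tendsto_const_nhds
      linarith [this]
    have hgyj : ∀ j, g (y j) = a (m j) := by
      intro j
      have h1 := hlim (y j) (hyK j)
      have h2 : (fun n => F n (y j) - g (y j)) =ᶠ[atTop] fun _ => a (m j) - g (y j) := by
        filter_upwards [eventually_ge_atTop (j+1)] with n hn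
        rw [hFyj j n (Nat.lt_of_succ_le hn)]
      have := tendsto_nhds_unique (h1.congr' h2) tendsto_const_nhds
      linarith [this]
    -- the derivative condition at xs fails
    have hQ := hdgd xs hxsK
    have hrt0 : Tendsto (fun n => dist (y n) xs) atTop (𝓝 0) :=
      squeeze_zero (fun n => dist_nonneg) (fun n => (hlt n).le)
        tendsto_one_div_add_atTop_nhds_zero_nat
    have hty : Tendsto y atTop (𝓝[K \ {xs}] xs) := by
      rw [tendsto_nhdsWithin_iff]
      constructor
      · exact tendsto_iff_dist_tendsto_zero.mpr hrt0
      · filter_upwards with n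
        exact ⟨hyK n, fun h => (hypos n).ne' (by rw [Set.mem_singleton_iff] at h; simp [h])⟩
    have hQy : Tendsto (fun j => (g (y j) - g xs - (inner ℝ (dg xs) (y j - xs) : ℝ)) / ‖y j - xs‖)
        atTop (𝓝 0) := hQ.comp hty
    set v := dg xs with hv
    have hev1 : ∀ᶠ j in atTop,
        |(g (y j) - g xs - (inner ℝ v (y j - xs) : ℝ)) / ‖y j - xs‖| < 1 := by
      have := hQy.eventually (eventually_abs_sub_lt 0 one_pos)
      simpa using this
    have hev2 : ∀ᶠ j in atTop, dist (y j) xs < (1/(‖v‖+1))^2 := by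
      have hδ : (0:ℝ) < (1/(‖v‖+1))^2 := by positivity
      exact hrt0.eventually (gt_mem_nhds hδ)
    obtain ⟨J, h1J, h2J⟩ := (hev1.and hev2).exists
    -- lower bound for the quotient at y J
    set r := dist (y J) xs with hr
    have hrpos : 0 < r := hypos J
    set s := Real.sqrt r with hs
    have hspos : 0 < s := Real.sqrt_pos.mpr hrpos
    have hnorm_eq : ‖y J - xs‖ = r := (dist_eq_norm (y J) xs).symm
    have hges : s ≤ g (y J) := by
      rw [hgyj J]
      exact (hsa J).trans (ha_anti (hm_le J))
    have hinner_le : (inner ℝ v (y J - xs) : ℝ) ≤ ‖v‖ * r := by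
      calc (inner ℝ v (y J - xs) : ℝ) ≤ ‖v‖ * ‖y J - xs‖ := real_inner_le_norm v _
      _ = ‖v‖ * r := by rw [hnorm_eq]
    have hnum : s - ‖v‖ * r ≤ g (y J) - g xs - (inner ℝ v (y J - xs) : ℝ) := by
      rw [hgxs]
      have := sub_le_sub hges hinner_le
      linarith [this]
    have hQlow : (s - ‖v‖ * r)/r ≤
        (g (y J) - g xs - (inner ℝ v (y J - xs) : ℝ)) / ‖y J - xs‖ := by
      rw [hnorm_eq]
      gcongr
    have hcalc : (s - ‖v‖ * r)/r = 1/s - ‖v‖ := by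
      have hrss : r = s * s := (Real.mul_self_sqrt hrpos.le).symm
      rw [hrss]
      field_simp
    have hslt : s < 1/(‖v‖+1) := by
      rw [hs]
      exact (Real.sqrt_lt' (show (0:ℝ) < 1/(‖v‖+1) by positivity)).mpr h2J
    have hvlt : ‖v‖ + 1 < 1/s := by
      rw [lt_div_iff₀ hspos]
      have h1 : (‖v‖+1) * s < (‖v‖+1) * (1/(‖v‖+1)) :=
        mul_lt_mul_of_pos_left hslt (by positivity)
      rw [mul_one_div, div_self (by positivity : ‖v‖+1 ≠ 0)] at h1
      exact h1
    have hge : 1/s - ‖v‖ ≤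
        (g (y J) - g xs - (inner ℝ v (y J - xs) : ℝ)) / ‖y J - xs‖ := hcalc ▸ hQlow
    have hlt1 := (abs_lt.mp h1J).2
    linarith
  exact ⟨F, hFmem, hcauchy, hnolimit⟩
end
end
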